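/- arXiv:2208.15000 — 3 statements merged into one kernel-verified Lean document; each statement's English description precedes it below -/
import Mathlib

section
/- Let P be a finite connected poset and K a field. The assignment sending a connected compatible partition π = (P_1,…,P_k) of P to the set F_π = {v ∈ D(M_P) : for every i, Σ_{p∈P_i} v_p = 0 and Σ_{p∈L} v_p ≤ 0 for every lower set L of the induced poset on P_i} is a bijection from the set of connected compatible partitions of P onto the set of faces of the cone D(M_P). -/
attribute [local instance] Classical.propDecidable

/-- A finite quiver: finite sets of vertices and arrows with source and target maps. -/
structure FinQuiver where
  V : Type
  A : Type
  [fintypeV : Fintype V]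
  [decEqV : DecidableEq V]
  [fintypeA : Fintype A]
  [decEqA : DecidableEq A]
  s : A → V
  t : A → V

attribute [instance] FinQuiver.fintypeV FinQuiver.decEqV FinQuiver.fintypeA FinQuiver.decEqA

/-- A finite-dimensional representation of a finite quiver over a field `K`. -/
structure QRep (K : Type) [Field K] (Q : FinQuiver) where
  M : Q.V → Type
  [acg : ∀ i, AddCommGroup (M i)]
  [mod : ∀ i, Module K (M i)]
  [fd : ∀ i, FiniteDimensional K (M i)]
  φ : ∀ a : Q.A, M (Q.s a) →ₗ[K] M (Q.t a)

attribute [instance] QRep.acg QRep.mod QRep.fd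

/-- A subrepresentation: a subspace at every vertex, compatible with the arrow maps. -/
structure QSubRep {K : Type} [Field K] {Q : FinQuiver} (R : QRep K Q) where
  L : ∀ i, Submodule K (R.M i)
  compat : ∀ a : Q.A, ∀ x ∈ L (Q.s a), R.φ a x ∈ L (Q.t a)

def QSubRep.le {K : Type} [Field K] {Q : FinQuiver} {R : QRep K Q} (N N' : QSubRep R) : Prop :=
  ∀ i, N.L i ≤ N'.L i

/-- The dimension vector of a representation. -/
noncomputable def QRep.dimVec {K : Type} [Field K] {Q : FinQuiver} (R : QRep K Q) (i : Q.V) : ℕ :=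
  Module.finrank K (R.M i)

/-- Standard inner product of a real vector with a dimension vector. -/
def stabInner {Q : FinQuiver} (v : Q.V → ℝ) (d : Q.V → ℕ) : ℝ :=
  ∑ i, v i * (d i : ℝ)

/-- `v`-semistability of a representation. -/
def IsSemistable {K : Type} [Field K] {Q : FinQuiver} (R : QRep K Q) (v : Q.V → ℝ) : Prop :=
  stabInner v R.dimVec = 0 ∧
    ∀ N : QSubRep R, stabInner v (fun i => Module.finrank K (N.L i)) ≤ 0

/-- The stability space of a representation. -/
def stabSpace {K : Type} [Field K] {Q : FinQuiver} (R : QRep K Q) : Set (Q.V → ℝ) :=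
  {v | IsSemistable R v}

/-- `v`-stability of a representation. -/
def IsStable {K : Type} [Field K] {Q : FinQuiver} (R : QRep K Q) (v : Q.V → ℝ) : Prop :=
  stabInner v R.dimVec = 0 ∧
    ∀ N : QSubRep R, (∃ i, N.L i ≠ ⊥) → (∃ i, N.L i ≠ ⊤) →
      stabInner v (fun i => Module.finrank K (N.L i)) < 0

/-- The thin sincere representation with identity maps: `K` at every vertex. -/
noncomputable def thinRep (K : Type) [Field K] (Q : FinQuiver) : QRep K Q where
  M _ := K
  φ _ := LinearMap.id

/-- The set of all finite non-negative real linear combinations of elements of `X`. -/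
def coneSpan {E : Type} [AddCommMonoid E] [Module ℝ E] (X : Set E) : Set E :=
  {x | ∃ (n : ℕ) (c : Fin n → ℝ) (f : Fin n → E),
    (∀ j, 0 ≤ c j) ∧ (∀ j, f j ∈ X) ∧ x = ∑ j, c j • f j}

/-- The standard basis vector of `ℝ^{Q₀}` at a vertex. -/
noncomputable def eVec (Q : FinQuiver) (i : Q.V) : Q.V → ℝ := Pi.single i 1

/-- A subrepresentation viewed as a representation in its own right. -/
noncomputable def QSubRep.toRep {K : Type} [Field K] {Q : FinQuiver} {R : QRep K Q}
    (N : QSubRep R) : QRep K Q where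
  M i := ↥(N.L i)
  φ a := (R.φ a).restrict (fun x hx => N.compat a x hx)

/-- The quotient of a representation by a subrepresentation. -/
noncomputable def QRep.quotBy {K : Type} [Field K] {Q : FinQuiver} (R : QRep K Q)
    (N : QSubRep R) : QRep K Q where
  M i := R.M i ⧸ N.L i
  φ a := Submodule.mapQ _ _ (R.φ a) (fun x hx => N.compat a x hx)

/-- The quotient `N'/N` of nested subrepresentations, as a representation. -/
noncomputable def quotRep {K : Type} [Field K] {Q : FinQuiver} (R : QRep K Q)
    (N N' : QSubRep R) (h : QSubRep.le N N') : QRep K Q where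
  M i := ↥(N'.L i) ⧸ Submodule.comap (N'.L i).subtype (N.L i)
  φ a := Submodule.mapQ _ _ ((R.φ a).restrict (fun x hx => N'.compat a x hx))
    (by
      intro x hx
      simp only [Submodule.mem_comap, Submodule.subtype_apply,
        LinearMap.restrict_apply] at hx ⊢
      exact N.compat a _ hx)

/-- A representation is nonzero if some vertex space is nonzero. -/
def QRep.Nonzero {K : Type} [Field K] {Q : FinQuiver} (R : QRep K Q) : Prop :=
  ∃ i, Module.finrank K (R.M i) ≠ 0

/-- Indecomposability: nonzero and admitting no internal direct sum decomposition into two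
nonzero subrepresentations. -/
def Indecomposable {K : Type} [Field K] {Q : FinQuiver} (R : QRep K Q) : Prop :=
  R.Nonzero ∧
    ¬∃ U W : QSubRep R, (∃ i, U.L i ≠ ⊥) ∧ (∃ i, W.L i ≠ ⊥) ∧
      (∀ i, U.L i ⊓ W.L i = ⊥) ∧ (∀ i, U.L i ⊔ W.L i = ⊤)

/-- Isomorphism of representations. -/
def RepIso {K : Type} [Field K] {Q : FinQuiver} (R R' : QRep K Q) : Prop :=
  ∃ f : ∀ i, R.M i ≃ₗ[K] R'.M i,
    ∀ (a : Q.A) (x : R.M (Q.s a)), f (Q.t a) (R.φ a x) = R'.φ a (f (Q.s a) x)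

/-- The support of a representation. -/
def QRep.supp {K : Type} [Field K] {Q : FinQuiver} (R : QRep K Q) : Set Q.V :=
  {i | Module.finrank K (R.M i) ≠ 0}

/-- The stability space restricted to the coordinate subspace of the support. -/
def Dsupp {K : Type} [Field K] {Q : FinQuiver} (R : QRep K Q) : Set (Q.V → ℝ) :=
  stabSpace R ∩ {v | ∀ i, i ∉ R.supp → v i = 0}

/-- Standard inner product on `ℝ^V`. -/
def rInner {V : Type} [Fintype V] (a v : V → ℝ) : ℝ := ∑ i, a i * v i

/-- A face of a polyhedral cone. -/
def IsFace {V : Type} [Fintype V] (C F : Set (V → ℝ)) : Prop :=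
  ∃ a : V → ℝ, (∀ v ∈ C, rInner a v ≤ 0) ∧ F = C ∩ {v | rInner a v = 0}

/-- The dimension of the linear span of a subset of `ℝ^V`. -/
noncomputable def coneDim {V : Type} [Fintype V] (F : Set (V → ℝ)) : ℕ :=
  Module.finrank ℝ ↥(Submodule.span ℝ F)

/-- A facet: a face of codimension one. -/
def IsFacet {V : Type} [Fintype V] (C F : Set (V → ℝ)) : Prop :=
  IsFace C F ∧ coneDim F + 1 = coneDim C

/-- Composability of a list of arrows (a directed path). -/
def PathComposable {Q : FinQuiver} : List Q.A → Prop
  | [] => True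
  | [_] => True
  | a :: b :: l => Q.t a = Q.s b ∧ PathComposable (b :: l)

/-- The Hasse quiver of a finite poset: one arrow `y → x` for each covering relation `x ⋖ y`. -/
noncomputable def hasseQuiver (P : Type) [PartialOrder P] [Fintype P] [DecidableEq P] :
    FinQuiver where
  V := P
  A := {q : P × P // q.1 ⋖ q.2}
  fintypeA := Fintype.ofFinite _
  s q := q.1.2
  t q := q.1.1

/-- The representation `M_S` of the Hasse quiver of `P` attached to a subset `S ⊆ P`:
a copy of `K` at each element of `S`, zero elsewhere, identity maps whenever possible. -/
noncomputable def MS (K : Type) [Field K] (P : Type) [PartialOrder P] [Fintype P]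
    [DecidableEq P] (S : Finset P) : QRep K (hasseQuiver P) where
  M p := ↥(if p ∈ S then (⊤ : Submodule K K) else ⊥)
  φ a :=
    if h : (hasseQuiver P).s a ∈ S ∧ (hasseQuiver P).t a ∈ S then
      { toFun := fun x => ⟨(x : K), by simp [h.2]⟩
        map_add' := fun x y => rfl
        map_smul' := fun c x => rfl }
    else 0

/-- The covering relation of the subposet induced on a subset `S`. -/
def covIn {P : Type} [PartialOrder P] (S : Finset P) (x y : P) : Prop :=
  x ∈ S ∧ y ∈ S ∧ x < y ∧ ∀ z ∈ S, ¬(x < z ∧ z < y)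

/-- Connectivity of the Hasse diagram of the subposet induced on `S`. -/
def connectedIn {P : Type} [PartialOrder P] (S : Finset P) : Prop :=
  ∀ x ∈ S, ∀ y ∈ S, Relation.ReflTransGen (fun u v => covIn S u v ∨ covIn S v u) x y

/-- Connectivity of a poset: its Hasse diagram is connected. -/
def posetConnected (P : Type) [PartialOrder P] : Prop :=
  Nonempty P ∧ ∀ x y : P, Relation.ReflTransGen (fun u v => u ⋖ v ∨ v ⋖ u) x y

/-- A partition of `P` into `k` blocks, given as a function `Fin k → Finset P`. -/
def IsFinPartition {P : Type} (k : ℕ) (B : Fin k → Finset P) : Prop :=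
  (∀ i, (B i).Nonempty) ∧ (∀ i j, i ≠ j → Disjoint (B i) (B j)) ∧ ∀ p : P, ∃ i, p ∈ B i

/-- The quotient relation on the blocks of a partition. -/
def blockRel {P : Type} [PartialOrder P] {k : ℕ} (B : Fin k → Finset P) (i j : Fin k) : Prop :=
  ∃ p ∈ B i, ∃ q ∈ B j, p ≤ q

/-- Compatibility of a partition: the transitive closure of the quotient relation is
antisymmetric (hence a partial order on the blocks). -/
def compatiblePart {P : Type} [PartialOrder P] {k : ℕ} (B : Fin k → Finset P) : Prop :=
  ∀ i j, Relation.TransGen (blockRel B) i j → Relation.TransGen (blockRel B) j i → i = j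

/-- The quotient relation on the blocks of a partition given as a finite set of blocks. -/
def blockRelF {P : Type} [PartialOrder P] (π : Finset (Finset P)) (S T : Finset P) : Prop :=
  S ∈ π ∧ T ∈ π ∧ ∃ p ∈ S, ∃ q ∈ T, p ≤ q

/-- The set of connected compatible partitions of `P`, viewed as finite sets of blocks. -/
def CCpartitions (P : Type) [PartialOrder P] [Fintype P] [DecidableEq P] :
    Set (Finset (Finset P)) :=
  {π | (∀ S ∈ π, S.Nonempty) ∧ (∀ S ∈ π, ∀ T ∈ π, S ≠ T → Disjoint S T) ∧
       (∀ p : P, ∃ S ∈ π, p ∈ S) ∧ (∀ S ∈ π, connectedIn S) ∧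
       ∀ S T : Finset P, Relation.TransGen (blockRelF π) S T →
         Relation.TransGen (blockRelF π) T S → S = T}

/-- `T` is a lower set of the subposet induced on the block `S`. -/
def lowerInBlock {P : Type} [PartialOrder P] (S T : Finset P) : Prop :=
  T ⊆ S ∧ ∀ x ∈ S, ∀ y ∈ T, x ≤ y → x ∈ T

/-- The set `F_π` attached to a partition `π` of `P`. -/
def Fpi (K : Type) [Field K] (P : Type) [PartialOrder P] [Fintype P] [DecidableEq P]
    (π : Finset (Finset P)) : Set (P → ℝ) :=
  {v | v ∈ stabSpace (thinRep K (hasseQuiver P)) ∧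
    ∀ S ∈ π, (∑ p ∈ S, v p = 0) ∧ ∀ T : Finset P, lowerInBlock S T → ∑ p ∈ T, v p ≤ 0}

section Aux
variable {P : Type} [PartialOrder P] [Fintype P] [DecidableEq P]

/-- A lower set, as a Finset. -/
def IsLowerF (L : Finset P) : Prop := ∀ ⦃x y : P⦄, x ≤ y → y ∈ L → x ∈ L

/-- Chain lemma: within any `S`, comparable elements are connected by `covIn S` steps. -/
lemma chain_covIn (S : Finset P) : ∀ n : ℕ, ∀ x y : P, x ∈ S → y ∈ S → x ≤ y →
    (Finset.univ.filter (fun z => x < z ∧ z < y ∧ z ∈ S)).card ≤ n →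
    Relation.ReflTransGen (covIn S) x y := by
  intro n
  induction n with
  | zero =>
    intro x y hx hy hxy hc
    rcases eq_or_lt_of_le hxy with rfl | hlt
    · exact Relation.ReflTransGen.refl
    · refine Relation.ReflTransGen.single ⟨hx, hy, hlt, ?_⟩
      intro z hz hcon
      have hmem : z ∈ Finset.univ.filter (fun z => x < z ∧ z < y ∧ z ∈ S) := by
        simp [hcon.1, hcon.2, hz]
      have : (Finset.univ.filter (fun z => x < z ∧ z < y ∧ z ∈ S)) = ∅ :=
        Finset.card_eq_zero.mp (Nat.le_zero.mp hc)
      simp [this] at hmem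
  | succ n ih =>
    intro x y hx hy hxy hc
    rcases eq_or_lt_of_le hxy with rfl | hlt
    · exact Relation.ReflTransGen.refl
    · by_cases hmid : ∃ z ∈ S, x < z ∧ z < y
      · obtain ⟨z, hzS, hxz, hzy⟩ := hmid
        have hsub1 : Finset.univ.filter (fun w => x < w ∧ w < z ∧ w ∈ S) ⊆
            (Finset.univ.filter (fun w => x < w ∧ w < y ∧ w ∈ S)).erase z := by
          intro w hw
          simp only [Finset.mem_filter, Finset.mem_univ, true_and] at hw
          refine Finset.mem_erase.mpr ⟨fun h => absurd (h ▸ hw.2.1) (lt_irrefl z), ?_⟩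
          simp only [Finset.mem_filter, Finset.mem_univ, true_and]
          exact ⟨hw.1, hw.2.1.trans hzy, hw.2.2⟩
        have hsub2 : Finset.univ.filter (fun w => z < w ∧ w < y ∧ w ∈ S) ⊆
            (Finset.univ.filter (fun w => x < w ∧ w < y ∧ w ∈ S)).erase z := by
          intro w hw
          simp only [Finset.mem_filter, Finset.mem_univ, true_and] at hw
          refine Finset.mem_erase.mpr ⟨fun h => absurd (h ▸ hw.1) (lt_irrefl z), ?_⟩
          simp only [Finset.mem_filter, Finset.mem_univ, true_and]
          exact ⟨hxz.trans hw.1, hw.2.1, hw.2.2⟩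
        have hz' : z ∈ Finset.univ.filter (fun w => x < w ∧ w < y ∧ w ∈ S) := by
          simp [hxz, hzy, hzS]
        have hcard : ((Finset.univ.filter (fun w => x < w ∧ w < y ∧ w ∈ S)).erase z).card ≤ n := by
          have := Finset.card_erase_of_mem hz'
          omega
        exact (ih x z hx hzS hxz.le ((Finset.card_le_card hsub1).trans hcard)).trans
          (ih z y hzS hy hzy.le ((Finset.card_le_card hsub2).trans hcard))
      · refine Relation.ReflTransGen.single ⟨hx, hy, hlt, ?_⟩
        intro z hz hcon
        exact hmid ⟨z, hz, hcon⟩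

lemma chain_covIn' (S : Finset P) {x y : P} (hx : x ∈ S) (hy : y ∈ S) (hxy : x ≤ y) :
    Relation.ReflTransGen (covIn S) x y :=
  chain_covIn S _ x y hx hy hxy le_rfl

lemma covIn_univ {x y : P} : covIn (Finset.univ : Finset P) x y ↔ x ⋖ y := by
  constructor
  · rintro ⟨-, -, h1, h2⟩
    exact ⟨h1, fun c hc hc' => h2 c (Finset.mem_univ c) ⟨hc, hc'⟩⟩
  · rintro ⟨h1, h2⟩
    exact ⟨Finset.mem_univ x, Finset.mem_univ y, h1, fun z _ hz => h2 hz.1 hz.2⟩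

/-- A set closed under "covered element of a member is a member" is a lower set. -/
lemma isLowerF_of_cov_closed {L : Finset P}
    (h : ∀ x y : P, x ⋖ y → y ∈ L → x ∈ L) : IsLowerF L := by
  intro x y hxy hy
  have hchain := chain_covIn' (Finset.univ : Finset P) (Finset.mem_univ x) (Finset.mem_univ y) hxy
  clear hxy
  induction hchain using Relation.ReflTransGen.head_induction_on with
  | refl => exact hy
  | head hstep _ ih => exact h _ _ (covIn_univ.mp hstep) ih

end Aux
section Dchar
variable {K : Type} [Field K] {P : Type} [PartialOrder P] [Fintype P] [DecidableEq P]

/-- The subrepresentation of the thin representation attached to a lower set. -/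
noncomputable def lowerSub (K : Type) [Field K] (L : Finset P) (hL : IsLowerF L) :
    QSubRep (thinRep K (hasseQuiver P)) where
  L i := if i ∈ L then ⊤ else ⊥
  compat a x hx := by
    beta_reduce at hx ⊢
    have hcov : a.1.1 ⋖ a.1.2 := a.2
    by_cases hs : a.1.2 ∈ L
    · have ht' : (hasseQuiver P).t a ∈ L := hL hcov.1.le hs
      rw [if_pos ht']
      exact Submodule.mem_top
    · have hs' : ¬((hasseQuiver P).s a ∈ L) := hs
      rw [if_neg hs'] at hx
      have hx0 : x = 0 := by simpa using hx
      subst hx0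
      rw [map_zero]
      exact Submodule.zero_mem _

/-- Bridge: the submodules of a subrepresentation of the thin representation, viewed as
submodules of `K`. -/
def NL (N : QSubRep (thinRep K (hasseQuiver P))) (p : P) : Submodule K K := N.L p

lemma NL_mono (N : QSubRep (thinRep K (hasseQuiver P))) {x y : P} (hcov : x ⋖ y) :
    NL N y ≤ NL N x := fun z hz => N.compat ⟨(x, y), hcov⟩ z hz

lemma finrank_ite (K : Type) [Field K] (c : Prop) [Decidable c] :
    Module.finrank K ↥(if c then (⊤ : Submodule K K) else ⊥) = if c then 1 else 0 := by
  by_cases h : c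
  · rw [if_pos h, if_pos h]
    simp
  · rw [if_neg h, if_neg h]
    simp

lemma sum_mul_indicator (v : P → ℝ) (L : Finset P) :
    ∑ p, v p * ((if p ∈ L then 1 else 0 : ℕ) : ℝ) = ∑ p ∈ L, v p := by
  have h : ∀ p : P, v p * ((if p ∈ L then 1 else 0 : ℕ) : ℝ) = if p ∈ L then v p else 0 := by
    intro p; split <;> simp
  rw [Finset.sum_congr rfl (fun p _ => h p), Finset.sum_ite_mem, Finset.univ_inter]

lemma mem_stabSpace_iff (v : P → ℝ) :
    v ∈ stabSpace (thinRep K (hasseQuiver P)) ↔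
      (∑ p, v p = 0) ∧ ∀ L : Finset P, IsLowerF L → ∑ p ∈ L, v p ≤ 0 := by
  have hdim : ∀ p : P, (thinRep K (hasseQuiver P)).dimVec p = 1 := fun p => by
    simp [QRep.dimVec, thinRep]
    exact Module.finrank_self K
  have hsum : stabInner v (thinRep K (hasseQuiver P)).dimVec = ∑ p, v p := by
    unfold stabInner
    apply Finset.sum_congr rfl
    intro p _
    rw [hdim p]
    simp
  constructor
  · rintro ⟨h1, h2⟩
    refine ⟨by rw [← hsum]; exact h1, ?_⟩
    intro L hL
    have key : stabInner v (fun i => Module.finrank K ((lowerSub K L hL).L i)) = ∑ p ∈ L, v p := by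
      unfold stabInner
      rw [← sum_mul_indicator v L]
      apply Finset.sum_congr rfl
      intro p _
      congr 1
      convert congrArg (Nat.cast : ℕ → ℝ) (finrank_ite K (p ∈ L))
      · simp only [lowerSub]
        split_ifs <;> rfl
      · exact Iff.rfl
    rw [← key]
    exact h2 (lowerSub K L hL)
  · rintro ⟨h1, h2⟩
    refine ⟨by rw [hsum]; exact h1, ?_⟩
    intro N
    set L : Finset P := Finset.univ.filter (fun p => NL N p = ⊤) with hLdef
    have hbt : ∀ p : P, NL N p = ⊥ ∨ NL N p = ⊤ := fun p => eq_bot_or_eq_top _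
    have hLlow : IsLowerF L := by
      apply isLowerF_of_cov_closed
      intro x y hcov hy
      have hyT : NL N y = ⊤ := by simpa [hLdef] using hy
      have hxT : NL N x = ⊤ := top_le_iff.mp (hyT ▸ NL_mono N hcov)
      simp [hLdef, hxT]
    have hrk : ∀ p : P, Module.finrank K (N.L p) = if p ∈ L then 1 else 0 := by
      intro p
      show Module.finrank K (NL N p) = if p ∈ L then 1 else 0
      rcases hbt p with h | h
      · have hp : p ∉ L := by rw [hLdef, Finset.mem_filter]; rintro ⟨-, h'⟩; exact bot_ne_top (h.symm.trans h')
        rw [h, if_neg hp]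
        simp
      · have hp : p ∈ L := by simp [hLdef, h]
        rw [h, if_pos hp]
        simp
    have key : stabInner v (fun i => Module.finrank K (N.L i)) = ∑ p ∈ L, v p := by
      unfold stabInner
      rw [← sum_mul_indicator v L]
      apply Finset.sum_congr rfl
      intro p _
      beta_reduce
      rw [hrk p]
    rw [key]
    exact h2 L hLlow

/-- The stability cone, typed over `P`. -/
def Dcone (K : Type) [Field K] (P : Type) [PartialOrder P] [Fintype P] [DecidableEq P] :
    Set (P → ℝ) := stabSpace (thinRep K (hasseQuiver P))

lemma mem_Dcone_iff (v : P → ℝ) :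
    v ∈ Dcone K P ↔
      (∑ p, v p = 0) ∧ ∀ L : Finset P, IsLowerF L → ∑ p ∈ L, v p ≤ 0 :=
  mem_stabSpace_iff v

end Dchar
section LinExt
variable {α : Type} [DecidableEq α]

lemma exists_min_aux (R : α → α → Prop) (htrans : Transitive R) (A : Finset α)
    (hanti : ∀ a ∈ A, ∀ b ∈ A, R a b → R b a → a = b) :
    ∀ n : ℕ, ∀ a ∈ A, (A.filter (fun x => R x a ∧ x ≠ a)).card ≤ n →
      ∃ m ∈ A, ∀ x ∈ A, R x m → x = m := by
  intro n
  induction n with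
  | zero =>
    intro a ha hc
    refine ⟨a, ha, ?_⟩
    intro x hx hR
    by_contra hne
    have hmem : x ∈ A.filter (fun x => R x a ∧ x ≠ a) := by simp [hx, hR, hne]
    rw [Finset.card_eq_zero.mp (Nat.le_zero.mp hc)] at hmem
    simp at hmem
  | succ n ih =>
    intro a ha hc
    by_cases hmin : ∃ b ∈ A, R b a ∧ b ≠ a
    · obtain ⟨b, hb, hRba, hbne⟩ := hmin
      apply ih b hb
      have hsub : A.filter (fun x => R x b ∧ x ≠ b) ⊆
          (A.filter (fun x => R x a ∧ x ≠ a)).erase b := by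
        intro x hx
        simp only [Finset.mem_filter] at hx
        refine Finset.mem_erase.mpr ⟨hx.2.2, ?_⟩
        simp only [Finset.mem_filter]
        refine ⟨hx.1, htrans hx.2.1 hRba, ?_⟩
        intro hxa
        subst hxa
        exact hbne (hanti b hb x hx.1 hRba hx.2.1)
      have hbmem : b ∈ A.filter (fun x => R x a ∧ x ≠ a) := by simp [hb, hRba, hbne]
      have h1 := Finset.card_erase_of_mem hbmem
      have h2 := Finset.card_le_card hsub
      omega
    · refine ⟨a, ha, fun x hx hR => ?_⟩
      by_contra hne
      exact hmin ⟨x, hx, hR, hne⟩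

lemma exists_min (R : α → α → Prop) (htrans : Transitive R) (A : Finset α)
    (hanti : ∀ a ∈ A, ∀ b ∈ A, R a b → R b a → a = b) (hA : A.Nonempty) :
    ∃ m ∈ A, ∀ x ∈ A, R x m → x = m :=
  let ⟨a, ha⟩ := hA
  exists_min_aux R htrans A hanti _ a ha le_rfl

lemma exists_linext_aux (R : α → α → Prop) (htrans : Transitive R) :
    ∀ n (A : Finset α), A.card ≤ n → (∀ a ∈ A, ∀ b ∈ A, R a b → R b a → a = b) →
    ∃ l : List α, l.Nodup ∧ (∀ a, a ∈ l ↔ a ∈ A) ∧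
      l.Pairwise (fun a b => R b a → b = a) := by
  intro n
  induction n with
  | zero =>
    intro A hA _
    refine ⟨[], by simp, fun a => ?_, by simp⟩
    simp [Finset.card_eq_zero.mp (Nat.le_zero.mp hA)]
  | succ n ih =>
    intro A hA hanti
    rcases A.eq_empty_or_nonempty with rfl | hne
    · exact ⟨[], by simp, by simp, by simp⟩
    obtain ⟨m, hm, hmin⟩ := exists_min R htrans A hanti hne
    obtain ⟨l, hnd, hmem, hpw⟩ := ih (A.erase m)
      (by have := Finset.card_erase_of_mem hm; omega)
      (fun a ha b hb => hanti a (Finset.mem_of_mem_erase ha) b (Finset.mem_of_mem_erase hb))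
    refine ⟨m :: l, ?_, ?_, ?_⟩
    · refine List.nodup_cons.mpr ⟨fun h => ?_, hnd⟩
      simpa using (hmem m).mp h
    · intro a
      simp only [List.mem_cons, hmem a, Finset.mem_erase]
      constructor
      · rintro (rfl | ⟨_, h⟩)
        · exact hm
        · exact h
      · intro ha
        by_cases h : a = m
        · exact Or.inl h
        · exact Or.inr ⟨h, ha⟩
    · refine List.pairwise_cons.mpr ⟨?_, hpw⟩
      intro b hb hRbm
      exact hmin b (Finset.mem_of_mem_erase ((hmem b).mp hb)) hRbm

lemma exists_linext (R : α → α → Prop) (htrans : Transitive R) (A : Finset α)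
    (hanti : ∀ a ∈ A, ∀ b ∈ A, R a b → R b a → a = b) :
    ∃ l : List α, l.Nodup ∧ (∀ a, a ∈ l ↔ a ∈ A) ∧
      l.Pairwise (fun a b => R b a → b = a) :=
  exists_linext_aux R htrans A.card A le_rfl hanti

lemma mem_take_iff_indexOf {l : List α} {a : α} (h : a ∈ l) :
    ∀ j : ℕ, a ∈ l.take j ↔ l.idxOf a < j := by
  induction l with
  | nil => simp at h
  | cons b t ih =>
    intro j
    cases j with
    | zero => simp
    | succ j =>
      by_cases hab : a = b
      · subst hab
        simp [List.take_succ_cons, List.idxOf_cons_self]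
      · have hat : a ∈ t := by
          rcases List.mem_cons.mp h with h' | h'
          · exact absurd h' hab
          · exact h'
        rw [List.take_succ_cons, List.idxOf_cons_ne _ (Ne.symm hab)]
        simp only [List.mem_cons, hab, false_or, ih hat j]
        omega

end LinExt

section UnionList
variable {P : Type} [PartialOrder P] [Fintype P] [DecidableEq P]

def unionList : List (Finset P) → Finset P
  | [] => ∅
  | S :: t => S ∪ unionList t

lemma mem_unionList (m : List (Finset P)) (p : P) :
    p ∈ unionList m ↔ ∃ S ∈ m, p ∈ S := by
  induction m with
  | nil => simp [unionList]
  | cons S t ih => simp [unionList, ih]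

lemma sum_unionList (v : P → ℝ) :
    ∀ m : List (Finset P), m.Pairwise (fun S T => Disjoint S T) →
    ∑ p ∈ unionList m, v p = (m.map (fun S => ∑ p ∈ S, v p)).sum := by
  intro m
  induction m with
  | nil => simp [unionList]
  | cons S t ih =>
    intro hpw
    rw [List.pairwise_cons] at hpw
    have hdisj : Disjoint S (unionList t) := by
      rw [Finset.disjoint_left]
      intro p hp hpt
      obtain ⟨T, hT, hpT⟩ := (mem_unionList t p).mp hpt
      exact (Finset.disjoint_left.mp (hpw.1 T hT) hp) hpT
    simp [unionList, Finset.sum_union hdisj, ih hpw.2]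

end UnionList
section PartMachinery
variable {K : Type} [Field K] {P : Type} [PartialOrder P] [Fintype P] [DecidableEq P]

/-- A linear extension of the block order of a partition, as a list. -/
structure BlockList (π : Finset (Finset P)) (l : List (Finset P)) : Prop where
  nodup : l.Nodup
  mem : ∀ S : Finset P, S ∈ l ↔ S ∈ π
  ord : ∀ S T : Finset P, blockRelF π S T → S ≠ T → l.idxOf S < l.idxOf T

lemma exists_blockList (π : Finset (Finset P)) (hπ : π ∈ CCpartitions P) :
    ∃ l : List (Finset P), BlockList π l := by
  obtain ⟨-, -, -, -, h5⟩ := hπ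
  obtain ⟨l, hnd, hmem, hpw⟩ := exists_linext (Relation.TransGen (blockRelF π))
    (fun a b c hab hbc => hab.trans hbc) π (fun a _ b _ hab hba => h5 a b hab hba)
  refine ⟨l, hnd, fun S => hmem S, ?_⟩
  intro S T hrel hne
  have hSl : S ∈ l := (hmem S).mpr hrel.1
  have hTl : T ∈ l := (hmem T).mpr hrel.2.1
  have hS : l.idxOf S < l.length := List.idxOf_lt_length_iff.mpr hSl
  have hT : l.idxOf T < l.length := List.idxOf_lt_length_iff.mpr hTl
  have hpw' := List.pairwise_iff_get.mp hpw
  rcases lt_trichotomy (l.idxOf S) (l.idxOf T) with h | h | h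
  · exact h
  · exfalso
    apply hne
    have : l.get ⟨l.idxOf S, hS⟩ = l.get ⟨l.idxOf T, hT⟩ := by
      congr 1
      exact Fin.ext h
    rw [List.idxOf_get hS, List.idxOf_get hT] at this
    exact this
  · exfalso
    have := hpw' ⟨l.idxOf T, hT⟩ ⟨l.idxOf S, hS⟩ h
    rw [List.idxOf_get hS, List.idxOf_get hT] at this
    exact hne (this (Relation.TransGen.single hrel))

lemma blockList_mem_take {π : Finset (Finset P)} {l : List (Finset P)} (hl : BlockList π l)
    {S : Finset P} (hS : S ∈ π) (j : ℕ) : S ∈ l.take j ↔ l.idxOf S < j :=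
  mem_take_iff_indexOf ((hl.mem S).mpr hS) j

lemma blockList_lower {π : Finset (Finset P)} {l : List (Finset P)}
    (hπ : π ∈ CCpartitions P) (hl : BlockList π l) (j : ℕ) :
    IsLowerF (unionList (l.take j)) := by
  intro x y hxy hy
  obtain ⟨T, hTt, hyT⟩ := (mem_unionList _ y).mp hy
  have hTπ : T ∈ π := (hl.mem T).mp (List.mem_of_mem_take hTt)
  obtain ⟨S, hSπ, hxS⟩ := hπ.2.2.1 x
  have hrel : blockRelF π S T := ⟨hSπ, hTπ, x, hxS, y, hyT, hxy⟩
  by_cases hST : S = T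
  · subst hST
    exact (mem_unionList _ x).mpr ⟨S, hTt, hxS⟩
  · have hidx : l.idxOf S < l.idxOf T := hl.ord S T hrel hST
    have hTj : l.idxOf T < j := (blockList_mem_take hl hTπ j).mp hTt
    exact (mem_unionList _ x).mpr ⟨S, (blockList_mem_take hl hSπ j).mpr (hidx.trans hTj), hxS⟩

lemma blockList_pwdisj {π : Finset (Finset P)} {l : List (Finset P)}
    (hπ : π ∈ CCpartitions P) (hl : BlockList π l) :
    l.Pairwise (fun S T => Disjoint S T) := by
  rw [List.pairwise_iff_get]
  intro i j hij
  have hne : l.get i ≠ l.get j := by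
    intro h
    have := List.nodup_iff_injective_get.mp hl.nodup h
    omega
  exact hπ.2.1 _ ((hl.mem _).mp (l.get_mem _)) _ ((hl.mem _).mp (l.get_mem _)) hne

lemma sum_take_eq {π : Finset (Finset P)} {l : List (Finset P)}
    (hπ : π ∈ CCpartitions P) (hl : BlockList π l) (v : P → ℝ) (j : ℕ) :
    ∑ p ∈ unionList (l.take j), v p = ((l.take j).map (fun S => ∑ p ∈ S, v p)).sum :=
  sum_unionList v _ ((blockList_pwdisj hπ hl).sublist (List.take_sublist j l))

lemma sum_take_zero {π : Finset (Finset P)} {l : List (Finset P)}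
    (hπ : π ∈ CCpartitions P) (hl : BlockList π l) {v : P → ℝ}
    (hv : ∀ S ∈ π, ∑ p ∈ S, v p = 0) (j : ℕ) :
    ∑ p ∈ unionList (l.take j), v p = 0 := by
  rw [sum_take_eq hπ hl v j]
  apply List.sum_eq_zero
  intro x hx
  obtain ⟨S, hS, rfl⟩ := List.mem_map.mp hx
  exact hv S ((hl.mem S).mp (List.mem_of_mem_take hS))

/-- `F_π` is cut out of the cone by the vanishing of the block sums. -/
lemma Fpi_eq_blocks (K : Type) [Field K] (π : Finset (Finset P)) (hπ : π ∈ CCpartitions P) :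
    Fpi K P π = stabSpace (thinRep K (hasseQuiver P)) ∩
      {v : P → ℝ | ∀ S ∈ π, ∑ p ∈ S, v p = 0} := by
  obtain ⟨l, hl⟩ := exists_blockList π hπ
  apply Set.eq_of_subset_of_subset
  · rintro v ⟨hvD, hv⟩
    exact ⟨hvD, fun S hS => (hv S hS).1⟩
  · rintro v ⟨hvD, hv⟩
    refine ⟨hvD, ?_⟩
    intro S hSπ
    refine ⟨hv S hSπ, ?_⟩
    intro T hT
    set j : ℕ := l.idxOf S with hj
    have hdisjT : Disjoint (unionList (l.take j)) T := by
      rw [Finset.disjoint_left]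
      intro p hp hpT
      obtain ⟨S', hS't, hpS'⟩ := (mem_unionList _ p).mp hp
      have hS'π : S' ∈ π := (hl.mem S').mp (List.mem_of_mem_take hS't)
      have hS'ne : S' ≠ S := by
        intro h
        subst h
        have := (blockList_mem_take hl hS'π j).mp hS't
        omega
      exact Finset.disjoint_left.mp (hπ.2.1 S' hS'π S hSπ hS'ne) hpS' (hT.1 hpT)
    have hLlow : IsLowerF (unionList (l.take j) ∪ T) := by
      intro x y hxy hy
      rcases Finset.mem_union.mp hy with hy1 | hy2
      · exact Finset.mem_union_left _ (blockList_lower hπ hl j hxy hy1)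
      · have hyS : y ∈ S := hT.1 hy2
        obtain ⟨S', hS'π, hxS'⟩ := hπ.2.2.1 x
        by_cases hST : S' = S
        · subst hST
          exact Finset.mem_union_right _ (hT.2 x hxS' y hy2 hxy)
        · have hidx : l.idxOf S' < j :=
            hj ▸ hl.ord S' S ⟨hS'π, hSπ, x, hxS', y, hyS, hxy⟩ hST
          exact Finset.mem_union_left _
            ((mem_unionList _ x).mpr ⟨S', (blockList_mem_take hl hS'π j).mpr hidx, hxS'⟩)
    have hsum : ∑ p ∈ unionList (l.take j) ∪ T, v p ≤ 0 :=
      ((mem_stabSpace_iff v).mp hvD).2 _ hLlow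
    rw [Finset.sum_union hdisjT, sum_take_zero hπ hl hv j] at hsum
    linarith

end PartMachinery
section FaceOfFpi
variable {K : Type} [Field K] {P : Type} [PartialOrder P] [Fintype P] [DecidableEq P]

lemma unionList_append (s t : List (Finset P)) :
    unionList (s ++ t) = unionList s ∪ unionList t := by
  induction s with
  | nil => simp [unionList]
  | cons a s ih => simp [unionList, ih, Finset.union_assoc]

lemma disj_prefix {π : Finset (Finset P)} {l : List (Finset P)}
    (hπ : π ∈ CCpartitions P) (hl : BlockList π l) {S : Finset P} (hSπ : S ∈ π) :
    Disjoint (unionList (l.take (l.idxOf S))) S := by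
  rw [Finset.disjoint_left]
  intro p hp hpS
  obtain ⟨S', hS't, hpS'⟩ := (mem_unionList _ p).mp hp
  have hS'π : S' ∈ π := (hl.mem S').mp (List.mem_of_mem_take hS't)
  have hS'ne : S' ≠ S := by
    intro h
    subst h
    have := (blockList_mem_take hl hS'π _).mp hS't
    omega
  exact Finset.disjoint_left.mp (hπ.2.1 S' hS'π S hSπ hS'ne) hpS' hpS

lemma Fpi_isFace (K : Type) [Field K] (π : Finset (Finset P)) (hπ : π ∈ CCpartitions P) :
    IsFace (stabSpace (thinRep K (hasseQuiver P))) (Fpi K P π) := by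
  obtain ⟨l, hl⟩ := exists_blockList π hπ
  set a : P → ℝ :=
    fun p => (((Finset.range l.length).filter (fun j => p ∈ unionList (l.take (j + 1)))).card : ℝ)
    with ha
  have hinner : ∀ v : P → ℝ,
      rInner a v = ∑ j ∈ Finset.range l.length, ∑ p ∈ unionList (l.take (j + 1)), v p := by
    intro v
    unfold rInner
    have hterm : ∀ p : P, a p * v p =
        ∑ j ∈ Finset.range l.length, if p ∈ unionList (l.take (j + 1)) then v p else 0 := by
      intro p
      rw [← Finset.sum_filter, Finset.sum_const, nsmul_eq_mul, ha]
    rw [Finset.sum_congr rfl (fun p _ => hterm p), Finset.sum_comm]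
    apply Finset.sum_congr rfl
    intro j _
    rw [Finset.sum_ite_mem, Finset.univ_inter]
  have hterm_le : ∀ v : P → ℝ, v ∈ stabSpace (thinRep K (hasseQuiver P)) → ∀ j : ℕ,
      ∑ p ∈ unionList (l.take (j + 1)), v p ≤ 0 := by
    intro v hv j
    exact ((mem_stabSpace_iff v).mp hv).2 _ (blockList_lower hπ hl (j + 1))
  refine ⟨a, ?_, ?_⟩
  · intro v hv
    refine (hinner v).le.trans ?_
    exact Finset.sum_nonpos (fun j _ => hterm_le v hv j)
  · apply Set.eq_of_subset_of_subset
    · intro v hv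
      have hv' : v ∈ stabSpace (thinRep K (hasseQuiver P)) ∩
          {v : P → ℝ | ∀ S ∈ π, ∑ p ∈ S, v p = 0} := by
        rw [← Fpi_eq_blocks K π hπ]
        exact hv
      refine ⟨hv'.1, ?_⟩
      show rInner a v = 0
      rw [hinner v]
      exact Finset.sum_eq_zero (fun j _ => sum_take_zero hπ hl hv'.2 (j + 1))
    · rintro v ⟨hvD, hv0⟩
      have hv0' : rInner a v = 0 := hv0
      rw [hinner v] at hv0'
      have hall : ∀ j ∈ Finset.range l.length, ∑ p ∈ unionList (l.take (j + 1)), v p = 0 :=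
        (Finset.sum_eq_zero_iff_of_nonpos (fun j _ => hterm_le v hvD j)).mp hv0'
      have hpre : ∀ j : ℕ, ∑ p ∈ unionList (l.take j), v p = 0 := by
        intro j
        rcases Nat.eq_zero_or_pos j with rfl | hj
        · simp [unionList]
        rcases Nat.lt_or_ge (j - 1) l.length with hlt | hge
        · have hcongr : l.take j = l.take ((j - 1) + 1) := by
            congr 1
            omega
          rw [hcongr]
          exact hall (j - 1) (Finset.mem_range.mpr hlt)
        · rw [List.take_of_length_le (by omega)]
          rcases Nat.eq_zero_or_pos l.length with hzero | hpos
          · have : l = [] := List.length_eq_zero_iff.mp hzero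
            simp [this, unionList]
          · have h := hall (l.length - 1) (Finset.mem_range.mpr (by omega))
            have heq : l.length - 1 + 1 = l.length := by omega
            rw [heq, List.take_length] at h
            exact h
      have hblock : ∀ S ∈ π, ∑ p ∈ S, v p = 0 := by
        intro S hSπ
        have hSl : S ∈ l := (hl.mem S).mpr hSπ
        have hidx : l.idxOf S < l.length := List.idxOf_lt_length_iff.mpr hSl
        have hsplit : l.take (l.idxOf S + 1) = l.take (l.idxOf S) ++ [S] := by
          rw [List.take_succ]
          congr 1
          have hgl : l[l.idxOf S]'hidx = S := List.idxOf_get hidx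
          rw [List.getElem?_eq_getElem hidx, hgl]
          rfl
        have h1 := hpre (l.idxOf S + 1)
        have h2 := hpre (l.idxOf S)
        rw [hsplit, unionList_append] at h1
        have hU : unionList [S] = S := by simp [unionList]
        rw [hU] at h1
        rw [Finset.sum_union (disj_prefix hπ hl hSπ), h2] at h1
        linarith
      rw [Fpi_eq_blocks K π hπ]
      exact ⟨hvD, hblock⟩

end FaceOfFpi
section ClassMachinery
variable {P : Type} [PartialOrder P] [Fintype P] [DecidableEq P]

/-- A lower set on which every element of `F` has vanishing sum. -/
def tightOn (F : Set (P → ℝ)) (L : Finset P) : Prop :=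
  IsLowerF L ∧ ∀ v ∈ F, ∑ p ∈ L, v p = 0

/-- The equivalence class of `p` under agreement on all `F`-tight lower sets. -/
noncomputable def classOf (F : Set (P → ℝ)) (p : P) : Finset P :=
  Finset.univ.filter (fun q => ∀ L : Finset P, tightOn F L → (p ∈ L ↔ q ∈ L))

lemma mem_classOf {F : Set (P → ℝ)} {p q : P} :
    q ∈ classOf F p ↔ ∀ L : Finset P, tightOn F L → (p ∈ L ↔ q ∈ L) := by
  simp [classOf]

lemma self_mem_classOf (F : Set (P → ℝ)) (p : P) : p ∈ classOf F p :=
  mem_classOf.mpr (fun _ _ => Iff.rfl)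

lemma classOf_eq_of_mem {F : Set (P → ℝ)} {p q : P} (h : q ∈ classOf F p) :
    classOf F q = classOf F p := by
  ext r
  rw [mem_classOf, mem_classOf]
  rw [mem_classOf] at h
  constructor
  · intro hr L hL
    exact (h L hL).trans (hr L hL)
  · intro hr L hL
    exact ((h L hL).symm).trans (hr L hL)

/-- The hypothesis that every element of `F` lies in the stability cone, phrased concretely. -/
def coneCond (F : Set (P → ℝ)) : Prop :=
  ∀ v ∈ F, (∑ p, v p = 0) ∧ ∀ L : Finset P, IsLowerF L → ∑ p ∈ L, v p ≤ 0

lemma tightOn_univ {F : Set (P → ℝ)} (hFD : coneCond F) : tightOn F Finset.univ :=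
  ⟨fun _ _ _ _ => Finset.mem_univ _, fun v hv => (hFD v hv).1⟩

lemma tightOn_empty {F : Set (P → ℝ)} : tightOn F ∅ :=
  ⟨fun x y _ h => by simp at h, fun v _ => by simp⟩

lemma tightOn_inter_union {F : Set (P → ℝ)} (hFD : coneCond F) {L L' : Finset P}
    (hL : tightOn F L) (hL' : tightOn F L') :
    tightOn F (L ∩ L') ∧ tightOn F (L ∪ L') := by
  have hlow1 : IsLowerF (L ∩ L') := fun x y hxy hy => by
    rw [Finset.mem_inter] at hy ⊢
    exact ⟨hL.1 hxy hy.1, hL'.1 hxy hy.2⟩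
  have hlow2 : IsLowerF (L ∪ L') := fun x y hxy hy => by
    rw [Finset.mem_union] at hy ⊢
    rcases hy with hy | hy
    · exact Or.inl (hL.1 hxy hy)
    · exact Or.inr (hL'.1 hxy hy)
  have key : ∀ v ∈ F, ∑ p ∈ L ∩ L', v p = 0 ∧ ∑ p ∈ L ∪ L', v p = 0 := by
    intro v hv
    have hadd : ∑ p ∈ L ∪ L', v p + ∑ p ∈ L ∩ L', v p = ∑ p ∈ L, v p + ∑ p ∈ L', v p :=
      Finset.sum_union_inter
    have h1 : ∑ p ∈ L ∩ L', v p ≤ 0 := (hFD v hv).2 _ hlow1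
    have h2 : ∑ p ∈ L ∪ L', v p ≤ 0 := (hFD v hv).2 _ hlow2
    rw [hL.2 v hv, hL'.2 v hv] at hadd
    constructor <;> linarith
  exact ⟨⟨hlow1, fun v hv => (key v hv).1⟩, ⟨hlow2, fun v hv => (key v hv).2⟩⟩

lemma mem_inf_iff (s : Finset (Finset P)) (q : P) :
    q ∈ s.inf id ↔ ∀ L ∈ s, q ∈ L := by
  induction s using Finset.induction_on with
  | empty => simp [Finset.top_eq_univ]
  | insert a s hnotmem ih => simp [Finset.inf_insert, ih]

lemma mem_sup_iff (s : Finset (Finset P)) (q : P) :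
    q ∈ s.sup id ↔ ∃ L ∈ s, q ∈ L := by
  induction s using Finset.induction_on with
  | empty => simp
  | insert a s hnotmem ih => simp [Finset.sup_insert, ih]

lemma tightOn_inf {F : Set (P → ℝ)} (hFD : coneCond F) (s : Finset (Finset P))
    (h : ∀ L ∈ s, tightOn F L) : tightOn F (s.inf id) := by
  induction s using Finset.induction_on with
  | empty =>
    rw [Finset.inf_empty, Finset.top_eq_univ]
    exact tightOn_univ hFD
  | insert a s hnotmem ih =>
    rw [Finset.inf_insert]
    have ha := h a (Finset.mem_insert_self a s)
    have hs := ih (fun L hL => h L (Finset.mem_insert_of_mem hL))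
    exact (tightOn_inter_union hFD ha hs).1

lemma tightOn_sup {F : Set (P → ℝ)} (hFD : coneCond F) (s : Finset (Finset P))
    (h : ∀ L ∈ s, tightOn F L) : tightOn F (s.sup id) := by
  induction s using Finset.induction_on with
  | empty =>
    rw [Finset.sup_empty]
    exact tightOn_empty
  | insert a s hnotmem ih =>
    rw [Finset.sup_insert]
    have ha := h a (Finset.mem_insert_self a s)
    have hs := ih (fun L hL => h L (Finset.mem_insert_of_mem hL))
    exact (tightOn_inter_union hFD ha hs).2

/-- The smallest tight set containing `p`. -/
noncomputable def Adef (F : Set (P → ℝ)) (p : P) : Finset P :=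
  ((Finset.univ.filter (tightOn F)).filter (fun L => p ∈ L)).inf id

/-- The largest tight set avoiding `p`. -/
noncomputable def Bdef (F : Set (P → ℝ)) (p : P) : Finset P :=
  ((Finset.univ.filter (tightOn F)).filter (fun L => p ∉ L)).sup id

lemma mem_Adef {F : Set (P → ℝ)} {p q : P} :
    q ∈ Adef F p ↔ ∀ L : Finset P, tightOn F L → p ∈ L → q ∈ L := by
  rw [Adef, mem_inf_iff]
  constructor
  · intro h L hL hp
    exact h L (by simp [hL, hp])
  · intro h L hL
    simp only [Finset.mem_filter, Finset.mem_univ, true_and] at hL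
    exact h L hL.1 hL.2

lemma mem_Bdef {F : Set (P → ℝ)} {p q : P} :
    q ∈ Bdef F p ↔ ∃ L : Finset P, tightOn F L ∧ p ∉ L ∧ q ∈ L := by
  rw [Bdef, mem_sup_iff]
  constructor
  · intro h
    obtain ⟨L, hL, hq⟩ := h
    simp only [Finset.mem_filter, Finset.mem_univ, true_and] at hL
    exact ⟨L, hL.1, hL.2, hq⟩
  · rintro ⟨L, h1, h2, h3⟩
    exact ⟨L, by simp [h1, h2], h3⟩

lemma tightOn_Adef {F : Set (P → ℝ)} (hFD : coneCond F) (p : P) : tightOn F (Adef F p) :=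
  tightOn_inf hFD _ (fun L hL => by
    simp only [Finset.mem_filter, Finset.mem_univ, true_and] at hL
    exact hL.1)

lemma tightOn_Bdef {F : Set (P → ℝ)} (hFD : coneCond F) (p : P) : tightOn F (Bdef F p) :=
  tightOn_sup hFD _ (fun L hL => by
    simp only [Finset.mem_filter, Finset.mem_univ, true_and] at hL
    exact hL.1)

lemma lower_Adef {F : Set (P → ℝ)} {p : P} : IsLowerF (Adef F p) := by
  intro x y hxy hy
  rw [mem_Adef] at hy ⊢
  intro L hL hp
  exact hL.1 hxy (hy L hL hp)

lemma lower_Bdef {F : Set (P → ℝ)} {p : P} : IsLowerF (Bdef F p) := by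
  intro x y hxy hy
  rw [mem_Bdef] at hy ⊢
  obtain ⟨L, h1, h2, h3⟩ := hy
  exact ⟨L, h1, h2, h1.1 hxy h3⟩

lemma classOf_eq_sdiff (F : Set (P → ℝ)) (p : P) : classOf F p = Adef F p \ Bdef F p := by
  ext q
  rw [mem_classOf, Finset.mem_sdiff, mem_Adef, mem_Bdef]
  constructor
  · intro h
    refine ⟨fun L hL hp => (h L hL).mp hp, ?_⟩
    rintro ⟨L, h1, h2, h3⟩
    exact h2 ((h L h1).mpr h3)
  · rintro ⟨h1, h2⟩ L hL
    constructor
    · intro hp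
      exact h1 L hL hp
    · intro hq
      by_contra hp
      exact h2 ⟨L, hL, hp, hq⟩

lemma p_mem_Adef {F : Set (P → ℝ)} (p : P) : p ∈ Adef F p :=
  mem_Adef.mpr (fun _ _ hp => hp)

lemma class_sum_zero {F : Set (P → ℝ)} (hFD : coneCond F) (p : P) (v : P → ℝ)
    (hv : ∀ L : Finset P, tightOn F L → ∑ q ∈ L, v q = 0) :
    ∑ q ∈ classOf F p, v q = 0 := by
  rw [classOf_eq_sdiff]
  have h1 : Adef F p \ Bdef F p = Adef F p \ (Adef F p ∩ Bdef F p) := by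
    rw [Finset.sdiff_inter_self_left]
  rw [h1, Finset.sum_sdiff_eq_sub Finset.inter_subset_left]
  have hA := hv _ (tightOn_Adef hFD p)
  have hAB := hv _ ((tightOn_inter_union hFD (tightOn_Adef hFD p) (tightOn_Bdef hFD p)).1)
  rw [hA, hAB]
  ring

end ClassMachinery
section ClassPartition
variable {P : Type} [PartialOrder P] [Fintype P] [DecidableEq P]

lemma connectedIn_classOf {F : Set (P → ℝ)} (hFD : coneCond F) (p : P) :
    connectedIn (classOf F p) := by
  intro x hx y hy
  by_contra hconn
  set Cl := classOf F p with hCl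
  set rel : P → P → Prop := fun u v => covIn Cl u v ∨ covIn Cl v u with hrel
  set Comp := Cl.filter (fun z => Relation.ReflTransGen rel x z) with hComp
  have hCompCl : Comp ⊆ Cl := Finset.filter_subset _ _
  have hcompcl : ∀ u w : P, u ∈ Cl → w ∈ Cl → u ≤ w → (u ∈ Comp ↔ w ∈ Comp) := by
    intro u w hu hw huw
    have hch : Relation.ReflTransGen rel u w :=
      Relation.ReflTransGen.mono (fun a b h => Or.inl h) _ _ (chain_covIn' Cl hu hw huw)
    have hch' : Relation.ReflTransGen rel w u :=
      by haveI : Std.Symm rel := ⟨fun a b h => Or.symm h⟩; exact Std.Symm.symm _ _ hch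
    constructor
    · intro h
      rw [hComp, Finset.mem_filter] at h ⊢
      exact ⟨hw, h.2.trans hch⟩
    · intro h
      rw [hComp, Finset.mem_filter] at h ⊢
      exact ⟨hu, h.2.trans hch'⟩
  have hxComp : x ∈ Comp := by
    rw [hComp, Finset.mem_filter]
    exact ⟨hx, Relation.ReflTransGen.refl⟩
  have hyComp : y ∉ Comp := by
    rw [hComp, Finset.mem_filter]
    rintro ⟨-, h⟩
    exact hconn h
  have hCl_sdiff : Cl = Adef F p \ Bdef F p := classOf_eq_sdiff F p
  have hClA : Cl ⊆ Adef F p := by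
    rw [hCl_sdiff]
    exact Finset.sdiff_subset
  have hClB : ∀ z ∈ Cl, z ∉ Bdef F p := by
    intro z hz
    rw [hCl_sdiff] at hz
    exact (Finset.mem_sdiff.mp hz).2
  have hlow : ∀ X : Finset P, X ⊆ Cl → (∀ u w, u ∈ Cl → w ∈ X → u ≤ w → u ∈ X) →
      IsLowerF ((Adef F p ∩ Bdef F p) ∪ X) := by
    intro X hXCl hXcl u w huw hw
    rcases Finset.mem_union.mp hw with hw1 | hw2
    · rw [Finset.mem_inter] at hw1
      exact Finset.mem_union_left _
        (Finset.mem_inter.mpr ⟨lower_Adef huw hw1.1, lower_Bdef huw hw1.2⟩)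
    · have hwCl : w ∈ Cl := hXCl hw2
      have huA : u ∈ Adef F p := lower_Adef huw (hClA hwCl)
      by_cases huB : u ∈ Bdef F p
      · exact Finset.mem_union_left _ (Finset.mem_inter.mpr ⟨huA, huB⟩)
      · have huCl : u ∈ Cl := by
          rw [hCl_sdiff]
          exact Finset.mem_sdiff.mpr ⟨huA, huB⟩
        exact Finset.mem_union_right _ (hXcl u w huCl hw2 huw)
  have hlowG1 : IsLowerF ((Adef F p ∩ Bdef F p) ∪ Comp) :=
    hlow Comp hCompCl (fun u w hu hw huw => (hcompcl u w hu (hCompCl hw) huw).mpr hw)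
  have hlowG2 : IsLowerF ((Adef F p ∩ Bdef F p) ∪ (Cl \ Comp)) :=
    hlow (Cl \ Comp) Finset.sdiff_subset (fun u w hu hw huw => by
      rw [Finset.mem_sdiff] at hw ⊢
      exact ⟨hu, fun huC => hw.2 ((hcompcl u w hu hw.1 huw).mp huC)⟩)
  have hdisj1 : Disjoint (Adef F p ∩ Bdef F p) Comp := by
    rw [Finset.disjoint_left]
    intro z hz hzC
    exact hClB z (hCompCl hzC) (Finset.mem_inter.mp hz).2
  have hdisj2 : Disjoint (Adef F p ∩ Bdef F p) (Cl \ Comp) := by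
    rw [Finset.disjoint_left]
    intro z hz hzC
    exact hClB z (Finset.mem_sdiff.mp hzC).1 (Finset.mem_inter.mp hz).2
  have htG1 : tightOn F ((Adef F p ∩ Bdef F p) ∪ Comp) := by
    refine ⟨hlowG1, ?_⟩
    intro v hv
    have h1 : ∑ q ∈ (Adef F p ∩ Bdef F p) ∪ Comp, v q ≤ 0 := (hFD v hv).2 _ hlowG1
    have h2 : ∑ q ∈ (Adef F p ∩ Bdef F p) ∪ (Cl \ Comp), v q ≤ 0 := (hFD v hv).2 _ hlowG2
    have hsdiff : ∑ q ∈ Cl \ Comp, v q = ∑ q ∈ Cl, v q - ∑ q ∈ Comp, v q :=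
      Finset.sum_sdiff_eq_sub hCompCl
    have hAB : ∑ q ∈ Adef F p ∩ Bdef F p, v q = 0 :=
      ((tightOn_inter_union hFD (tightOn_Adef hFD p) (tightOn_Bdef hFD p)).1).2 v hv
    have hClsum : ∑ q ∈ Cl, v q = 0 := class_sum_zero hFD p v (fun L hL => hL.2 v hv)
    rw [Finset.sum_union hdisj1] at h1 ⊢
    rw [Finset.sum_union hdisj2] at h2
    linarith
  have hxy : ∀ L : Finset P, tightOn F L → (x ∈ L ↔ y ∈ L) := by
    have hx' := mem_classOf.mp hx
    have hy' := mem_classOf.mp hy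
    intro L hL
    exact (hx' L hL).symm.trans (hy' L hL)
  have hyG1 : y ∈ (Adef F p ∩ Bdef F p) ∪ Comp :=
    (hxy _ htG1).mp (Finset.mem_union_right _ hxComp)
  rcases Finset.mem_union.mp hyG1 with h | h
  · exact hClB y hy (Finset.mem_inter.mp h).2
  · exact hyComp h

lemma classOf_subset_tight {F : Set (P → ℝ)} {p : P} {L : Finset P}
    (hL : tightOn F L) (hp : p ∈ L) : classOf F p ⊆ L := by
  intro q hq
  exact (mem_classOf.mp hq L hL).mp hp

lemma block_rel_sub {F : Set (P → ℝ)}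
    {π : Finset (Finset P)} (hπ : π = Finset.image (fun p => classOf F p) Finset.univ)
    {S T : Finset P} (h : Relation.TransGen (blockRelF π) S T) :
    ∀ L : Finset P, tightOn F L → T ⊆ L → S ⊆ L := by
  induction h with
  | single hST =>
    obtain ⟨hSπ, hTπ, q, hq, r, hr, hqr⟩ := hST
    intro L hL hTL
    have hqL : q ∈ L := hL.1 hqr (hTL hr)
    obtain ⟨s, -, hs⟩ := Finset.mem_image.mp (hπ ▸ hSπ)
    have hSq : classOf F q = S := by
      rw [← hs] at hq ⊢
      exact classOf_eq_of_mem hq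
    rw [← hSq]
    exact classOf_subset_tight hL hqL
  | tail hmid hlast ih =>
    rename_i b c
    intro L hL hcL
    obtain ⟨hbπ, hcπ, q, hq, r, hr, hqr⟩ := hlast
    have hqL : q ∈ L := hL.1 hqr (hcL hr)
    obtain ⟨s, -, hs⟩ := Finset.mem_image.mp (hπ ▸ hbπ)
    have hbq : classOf F q = b := by
      rw [← hs] at hq ⊢
      exact classOf_eq_of_mem hq
    exact ih L hL (hbq ▸ classOf_subset_tight hL hqL)

lemma classPartition_CC {F : Set (P → ℝ)} (hFD : coneCond F) :
    Finset.image (fun p => classOf F p) Finset.univ ∈ CCpartitions P := by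
  set π := Finset.image (fun p => classOf F p) Finset.univ with hπ
  refine ⟨?_, ?_, ?_, ?_, ?_⟩
  · intro S hS
    obtain ⟨q, -, hq⟩ := Finset.mem_image.mp hS
    exact ⟨q, hq ▸ self_mem_classOf F q⟩
  · intro S hS T hT hne
    obtain ⟨q, -, hq⟩ := Finset.mem_image.mp hS
    obtain ⟨r, -, hr⟩ := Finset.mem_image.mp hT
    rw [Finset.disjoint_left]
    intro x hxS hxT
    apply hne
    rw [← hq, ← hr]
    rw [← hq] at hxS
    rw [← hr] at hxT
    rw [← classOf_eq_of_mem hxS, ← classOf_eq_of_mem hxT]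
  · intro q
    exact ⟨classOf F q, Finset.mem_image.mpr ⟨q, Finset.mem_univ q, rfl⟩, self_mem_classOf F q⟩
  · intro S hS
    obtain ⟨q, -, hq⟩ := Finset.mem_image.mp hS
    exact hq ▸ connectedIn_classOf hFD q
  · intro S T h1 h2
    have hmem : ∀ {U V : Finset P}, Relation.TransGen (blockRelF π) U V → U ∈ π ∧ V ∈ π := by
      intro U V h
      induction h with
      | single h => exact ⟨h.1, h.2.1⟩
      | tail hmid hlast ih => exact ⟨ih.1, hlast.2.1⟩
    obtain ⟨q, -, hq⟩ := Finset.mem_image.mp ((hmem h1).1)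
    obtain ⟨r, -, hr⟩ := Finset.mem_image.mp ((hmem h1).2)
    have himp1 := block_rel_sub hπ h1
    have himp2 := block_rel_sub hπ h2
    have hrq : r ∈ classOf F q := by
      rw [mem_classOf]
      intro L hL
      constructor
      · intro hqL
        have hSL : S ⊆ L := hq ▸ classOf_subset_tight hL hqL
        have hTL : T ⊆ L := himp2 L hL hSL
        exact hTL (hr ▸ self_mem_classOf F r)
      · intro hrL
        have hTL : T ⊆ L := hr ▸ classOf_subset_tight hL hrL
        have hSL : S ⊆ L := himp1 L hL hTL
        exact hSL (hq ▸ self_mem_classOf F q)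
    rw [← hq, ← hr, classOf_eq_of_mem hrq]

end ClassPartition
section SurjCore
variable {K : Type} [Field K] {P : Type} [PartialOrder P] [Fintype P] [DecidableEq P]

lemma face_perturb (K : Type) [Field K] (a : P → ℝ)
    (ha : ∀ v : P → ℝ, v ∈ Dcone K P → rInner a v ≤ 0) :
    ∀ w : P → ℝ, w ∈ Dcone K P →
      (∀ L : Finset P, tightOn (Dcone K P ∩
          {v : P → ℝ | rInner a v = 0}) L → ∑ p ∈ L, w p = 0) →
      w ∈ Dcone K P ∩ {v : P → ℝ | rInner a v = 0} := by
  set C : Set (P → ℝ) := Dcone K P with hC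
  set F : Set (P → ℝ) := C ∩ {v : P → ℝ | rInner a v = 0} with hF
  have hFD : coneCond F := fun v hv => (mem_Dcone_iff v).mp hv.1
  have hzero : (0 : P → ℝ) ∈ F := by
    constructor
    · rw [hC, mem_Dcone_iff]
      constructor
      · simp
      · intro L _
        simp
    · show rInner a 0 = 0
      unfold rInner
      simp
  have hadd : ∀ v w : P → ℝ, v ∈ F → w ∈ F → v + w ∈ F := by
    intro v w hv hw
    have hvC := (mem_Dcone_iff v).mp hv.1
    have hwC := (mem_Dcone_iff w).mp hw.1
    constructor
    · rw [hC, mem_Dcone_iff]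
      constructor
      · simp only [Pi.add_apply, Finset.sum_add_distrib, hvC.1, hwC.1, add_zero]
      · intro L hL
        have := hvC.2 L hL
        have := hwC.2 L hL
        simp only [Pi.add_apply, Finset.sum_add_distrib]
        linarith
    · show rInner a (v + w) = 0
      have h1 : rInner a v = 0 := hv.2
      have h2 : rInner a w = 0 := hw.2
      unfold rInner at h1 h2 ⊢
      simp only [Pi.add_apply, mul_add, Finset.sum_add_distrib, h1, h2, add_zero]
  intro w hwC hwt
  set NT : Finset (Finset P) := Finset.univ.filter (fun L => IsLowerF L ∧ ¬ tightOn F L)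
    with hNT
  have hvL : ∀ L ∈ NT, ∃ v, v ∈ F ∧ ∑ p ∈ L, v p < 0 := by
    intro L hL
    rw [hNT, Finset.mem_filter] at hL
    have hlow := hL.2.1
    have hnt := hL.2.2
    rw [tightOn] at hnt
    push_neg at hnt
    obtain ⟨v, hvF, hvne⟩ := hnt hlow
    exact ⟨v, hvF, lt_of_le_of_ne ((hFD v hvF).2 L hlow) hvne⟩
  choose vf hvfF hvfneg using hvL
  set v0 : P → ℝ := ∑ L ∈ NT.attach, vf L.1 L.2 with hv0
  have hv0F : v0 ∈ F := by
    have key : ∀ s : Finset {x // x ∈ NT}, (∑ L ∈ s, vf L.1 L.2) ∈ F := by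
      intro s
      induction s using Finset.induction_on with
      | empty => simpa using hzero
      | insert b s hnm ih =>
        rw [Finset.sum_insert hnm]
        exact hadd _ _ (hvfF b.1 b.2) ih
    exact key NT.attach
  have hsum_apply : ∀ (T : Finset P), ∑ p ∈ T, v0 p =
      ∑ L ∈ NT.attach, ∑ p ∈ T, vf L.1 L.2 p := by
    intro T
    rw [hv0]
    rw [Finset.sum_congr rfl (fun p _ => Finset.sum_apply p NT.attach _)]
    exact Finset.sum_comm
  have hv0neg : ∀ L ∈ NT, ∑ p ∈ L, v0 p < 0 := by
    intro L hL
    rw [hsum_apply L]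
    have hle : ∀ L' ∈ NT.attach, ∑ p ∈ L, vf L'.1 L'.2 p ≤ (0 : ℝ) := by
      intro L' _
      have hlow : IsLowerF L := (Finset.mem_filter.mp (hNT ▸ hL)).2.1
      exact (hFD _ (hvfF L'.1 L'.2)).2 L hlow
    have hstrict : ∑ p ∈ L, vf L hL p < 0 := hvfneg L hL
    calc ∑ L' ∈ NT.attach, ∑ p ∈ L, vf L'.1 L'.2 p
        < ∑ _L' ∈ NT.attach, (0 : ℝ) := by
          apply Finset.sum_lt_sum hle
          exact ⟨⟨L, hL⟩, Finset.mem_attach _ _, hstrict⟩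
      _ = 0 := by simp
  -- choose the scaling factor
  set NTpos : Finset (Finset P) :=
    NT.filter (fun L => 0 < ∑ p ∈ L, v0 p - ∑ p ∈ L, w p) with hNTpos
  set δ : ℝ := if h : NTpos.Nonempty then
      NTpos.inf' h (fun L => (-(∑ p ∈ L, v0 p)) / (∑ p ∈ L, v0 p - ∑ p ∈ L, w p)) else 1
    with hδ
  have hδpos : 0 < δ := by
    rw [hδ]
    split
    · rename_i h
      rw [Finset.lt_inf'_iff]
      intro L hL
      have hLNT : L ∈ NT := (Finset.mem_filter.mp hL).1
      have hd : 0 < ∑ p ∈ L, v0 p - ∑ p ∈ L, w p := (Finset.mem_filter.mp hL).2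
      exact div_pos (by linarith [hv0neg L hLNT]) hd
    · norm_num
  have hδle : ∀ L ∈ NTpos, δ * (∑ p ∈ L, v0 p - ∑ p ∈ L, w p) ≤ -(∑ p ∈ L, v0 p) := by
    intro L hL
    have hd : 0 < ∑ p ∈ L, v0 p - ∑ p ∈ L, w p := (Finset.mem_filter.mp hL).2
    have hle : δ ≤ (-(∑ p ∈ L, v0 p)) / (∑ p ∈ L, v0 p - ∑ p ∈ L, w p) := by
      rw [hδ, dif_pos ⟨L, hL⟩]
      exact Finset.inf'_le _ hL
    rw [le_div_iff₀ hd] at hle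
    linarith
  set u : P → ℝ := fun p => v0 p + δ * (v0 p - w p) with hu
  have hsum_u : ∀ T : Finset P,
      ∑ p ∈ T, u p = ∑ p ∈ T, v0 p + δ * (∑ p ∈ T, v0 p - ∑ p ∈ T, w p) := by
    intro T
    calc ∑ p ∈ T, u p = ∑ p ∈ T, (v0 p + δ * (v0 p - w p)) :=
          Finset.sum_congr rfl (fun p _ => rfl)
      _ = ∑ p ∈ T, v0 p + δ * (∑ p ∈ T, v0 p - ∑ p ∈ T, w p) := by
          rw [Finset.sum_add_distrib, ← Finset.mul_sum, Finset.sum_sub_distrib]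
  have hv0C := (mem_Dcone_iff v0).mp hv0F.1
  have hwC' := (mem_Dcone_iff w).mp hwC
  have huC : u ∈ C := by
    rw [hC, mem_Dcone_iff]
    constructor
    · have := hsum_u Finset.univ
      rw [hv0C.1, hwC'.1] at this
      simpa using this
    · intro L hL
      rw [hsum_u L]
      by_cases ht : tightOn F L
      · rw [ht.2 v0 hv0F, hwt L ht]
        simp
      · have hLNT : L ∈ NT := by
          rw [hNT, Finset.mem_filter]
          exact ⟨Finset.mem_univ L, hL, ht⟩
        have hneg := hv0neg L hLNT
        by_cases hd : 0 < ∑ p ∈ L, v0 p - ∑ p ∈ L, w p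
        · have := hδle L (by rw [hNTpos, Finset.mem_filter]; exact ⟨hLNT, hd⟩)
          linarith
        · push_neg at hd
          have : δ * (∑ p ∈ L, v0 p - ∑ p ∈ L, w p) ≤ 0 :=
            mul_nonpos_of_nonneg_of_nonpos hδpos.le hd
          linarith
  have hrin : rInner a u = rInner a v0 + δ * (rInner a v0 - rInner a w) := by
    unfold rInner
    rw [hu]
    have hterm : ∀ p : P, a p * (v0 p + δ * (v0 p - w p)) =
        a p * v0 p + δ * (a p * v0 p - a p * w p) := fun p => by ring
    rw [Finset.sum_congr rfl (fun p _ => hterm p), Finset.sum_add_distrib]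
    congr 1
    rw [← Finset.mul_sum, Finset.sum_sub_distrib]
  have hv0in : rInner a v0 = 0 := hv0F.2
  have hule : rInner a u ≤ 0 := ha u huC
  rw [hrin, hv0in] at hule
  have hwin : rInner a w ≤ 0 := ha w hwC
  have : rInner a w = 0 := by
    rcases lt_or_eq_of_le hwin with hlt | heq
    · nlinarith
    · exact heq
  exact ⟨hwC, this⟩

end SurjCore
section SurjAssemble
variable {K : Type} [Field K] {P : Type} [PartialOrder P] [Fintype P] [DecidableEq P]

lemma stabSpace_eq_Dcone (K : Type) [Field K] :
    (stabSpace (thinRep K (hasseQuiver P)) : Set (P → ℝ)) = Dcone K P := rfl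

lemma surj_core (K : Type) [Field K] (a : P → ℝ)
    (ha : ∀ v : P → ℝ, v ∈ Dcone K P → rInner a v ≤ 0) :
    ∃ π ∈ CCpartitions P, Fpi K P π = Dcone K P ∩ {v : P → ℝ | rInner a v = 0} := by
  set F : Set (P → ℝ) := Dcone K P ∩ {v : P → ℝ | rInner a v = 0} with hF
  have hFD : coneCond F := fun v hv => (mem_Dcone_iff v).mp hv.1
  have hcc := classPartition_CC (P := P) hFD
  refine ⟨Finset.image (fun p => classOf F p) Finset.univ, hcc, ?_⟩
  rw [Fpi_eq_blocks K _ hcc, stabSpace_eq_Dcone K]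
  ext v
  constructor
  · rintro ⟨hvD, hvb⟩
    have htight : ∀ L : Finset P, tightOn F L → ∑ p ∈ L, v p = 0 := by
      intro L hL
      have hLparts : L =
          ((Finset.image (fun p => classOf F p) Finset.univ).filter
            (fun S => S ⊆ L)).biUnion id := by
        ext r
        constructor
        · intro hr
          apply Finset.mem_biUnion.mpr
          refine ⟨classOf F r, ?_, self_mem_classOf F r⟩
          rw [Finset.mem_filter]
          exact ⟨Finset.mem_image.mpr ⟨r, Finset.mem_univ r, rfl⟩,
            classOf_subset_tight hL hr⟩
        · intro hr
          obtain ⟨S, hSf, hrS⟩ := Finset.mem_biUnion.mp hr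
          exact (Finset.mem_filter.mp hSf).2 hrS
      have hdisj : (↑((Finset.image (fun p => classOf F p) Finset.univ).filter
          (fun S => S ⊆ L)) : Set (Finset P)).PairwiseDisjoint id := by
        intro S hS T hT hne
        have hSπ := (Finset.mem_filter.mp hS).1
        have hTπ := (Finset.mem_filter.mp hT).1
        exact hcc.2.1 S hSπ T hTπ hne
      calc ∑ p ∈ L, v p
          = ∑ S ∈ (Finset.image (fun p => classOf F p) Finset.univ).filter
              (fun S => S ⊆ L), ∑ p ∈ S, v p := by
            conv_lhs => rw [hLparts]
            exact Finset.sum_biUnion hdisj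
        _ = 0 := by
            apply Finset.sum_eq_zero
            intro S hS
            exact hvb S (Finset.mem_filter.mp hS).1
    exact face_perturb K a ha v hvD htight
  · intro hv
    refine ⟨hv.1, ?_⟩
    intro S hS
    obtain ⟨q, -, hq⟩ := Finset.mem_image.mp hS
    rw [← hq]
    exact class_sum_zero hFD q v (fun L hL => hL.2 v hv)

end SurjAssemble

section InjCore
variable {K : Type} [Field K] {P : Type} [PartialOrder P] [Fintype P] [DecidableEq P]

noncomputable def testVec (u w : P) : P → ℝ :=
  fun r => (if r = w then 1 else 0) - (if r = u then 1 else 0)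

lemma sum_testVec (u w : P) (T : Finset P) :
    ∑ p ∈ T, testVec u w p =
      (if w ∈ T then (1 : ℝ) else 0) - (if u ∈ T then (1 : ℝ) else 0) := by
  unfold testVec
  rw [Finset.sum_sub_distrib]
  congr 1 <;> rw [Finset.sum_ite_eq' T]

lemma testVec_mem_Fpi (K : Type) [Field K] (π : Finset (Finset P)) (hπ : π ∈ CCpartitions P)
    {S : Finset P} (hS : S ∈ π) {u w : P} (hu : u ∈ S) (hw : w ∈ S) (huw : u ≤ w) :
    testVec u w ∈ Fpi K P π := by
  have hD : testVec u w ∈ Dcone K P := by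
    rw [mem_Dcone_iff]
    constructor
    · rw [show (∑ p, testVec u w p) = ∑ p ∈ Finset.univ, testVec u w p from rfl, sum_testVec]
      simp
    · intro L hL
      rw [sum_testVec]
      by_cases hwL : w ∈ L
      · have huL : u ∈ L := hL huw hwL
        simp [hwL, huL]
      · simp only [hwL, if_false]
        split <;> norm_num
  refine ⟨hD, ?_⟩
  intro S' hS'
  constructor
  · rw [sum_testVec]
    by_cases hSS : S' = S
    · subst hSS
      simp [hu, hw]
    · have hdisj := hπ.2.1 S' hS' S hS hSS
      have hu' : u ∉ S' := fun h => (Finset.disjoint_left.mp hdisj h) hu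
      have hw' : w ∉ S' := fun h => (Finset.disjoint_left.mp hdisj h) hw
      simp [hu', hw']
  · intro T hT
    rw [sum_testVec]
    by_cases hwT : w ∈ T
    · have hSS : S' = S := by
        by_contra hne
        exact (Finset.disjoint_left.mp (hπ.2.1 S' hS' S hS hne) (hT.1 hwT)) hw
      subst hSS
      have huT : u ∈ T := hT.2 u hu w hwT huw
      simp [hwT, huT]
    · simp only [hwT, if_false]
      split <;> norm_num

lemma block_eq_classOf (K : Type) [Field K] (π : Finset (Finset P)) (hπ : π ∈ CCpartitions P)
    {S : Finset P} (hS : S ∈ π) {p : P} (hp : p ∈ S) :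
    classOf (Fpi K P π) p = S := by
  obtain ⟨l, hl⟩ := exists_blockList π hπ
  have htpre : ∀ j : ℕ, tightOn (Fpi K P π) (unionList (l.take j)) := by
    intro j
    refine ⟨blockList_lower hπ hl j, ?_⟩
    intro v hv
    exact sum_take_zero hπ hl (fun S' hS' => (hv.2 S' hS').1) j
  have hidxle : ∀ (T T' : Finset P) (r : P), T ∈ π → T' ∈ π → r ∈ T →
      r ∈ unionList (l.take (l.idxOf T' + 1)) → l.idxOf T ≤ l.idxOf T' := by
    intro T T' r hT hT' hrT hrU
    obtain ⟨T'', hT''t, hrT''⟩ := (mem_unionList _ r).mp hrU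
    have hT''π : T'' ∈ π := (hl.mem T'').mp (List.mem_of_mem_take hT''t)
    have hTT : T'' = T := by
      by_contra hne
      exact (Finset.disjoint_left.mp (hπ.2.1 T'' hT''π T hT hne) hrT'') hrT
    subst hTT
    have := (blockList_mem_take hl hT''π _).mp hT''t
    omega
  apply Finset.Subset.antisymm
  · intro q hq
    obtain ⟨S', hS'π, hqS'⟩ := hπ.2.2.1 q
    have hSl : S ∈ l := (hl.mem S).mpr hS
    have hS'l : S' ∈ l := (hl.mem S').mpr hS'π
    have hSlen : l.idxOf S < l.length := List.idxOf_lt_length_iff.mpr hSl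
    have hS'len : l.idxOf S' < l.length := List.idxOf_lt_length_iff.mpr hS'l
    have hpU : p ∈ unionList (l.take (l.idxOf S + 1)) :=
      (mem_unionList _ p).mpr ⟨S, (blockList_mem_take hl hS _).mpr (by omega), hp⟩
    have hqU : q ∈ unionList (l.take (l.idxOf S + 1)) :=
      (mem_classOf.mp hq _ (htpre _)).mp hpU
    have hle1 : l.idxOf S' ≤ l.idxOf S := hidxle S' S q hS'π hS hqS' hqU
    have hqU' : q ∈ unionList (l.take (l.idxOf S' + 1)) :=
      (mem_unionList _ q).mpr ⟨S', (blockList_mem_take hl hS'π _).mpr (by omega), hqS'⟩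
    have hpU' : p ∈ unionList (l.take (l.idxOf S' + 1)) :=
      (mem_classOf.mp hq _ (htpre _)).mpr hqU'
    have hle2 : l.idxOf S ≤ l.idxOf S' := hidxle S S' p hS hS'π hp hpU'
    have hidx : l.idxOf S' = l.idxOf S := le_antisymm hle1 hle2
    have hSS : S' = S := by
      have h1 : l.get ⟨l.idxOf S', hS'len⟩ = S' := List.idxOf_get hS'len
      have h2 : l.get ⟨l.idxOf S, hSlen⟩ = S := List.idxOf_get hSlen
      rw [← h1, ← h2]
      congr 1
      exact Fin.ext hidx
    exact hSS ▸ hqS'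
  · have hstep : ∀ u w : P, (covIn S u w ∨ covIn S w u) →
        ∀ L : Finset P, tightOn (Fpi K P π) L → (u ∈ L ↔ w ∈ L) := by
      have key : ∀ u w : P, covIn S u w →
          ∀ L : Finset P, tightOn (Fpi K P π) L → (u ∈ L ↔ w ∈ L) := by
        intro u w hcov L hL
        obtain ⟨huS, hwS, hlt, -⟩ := hcov
        constructor
        · intro huL
          by_contra hwL
          have h0 := hL.2 (testVec u w) (testVec_mem_Fpi K π hπ hS huS hwS hlt.le)
          rw [sum_testVec] at h0
          simp [huL, hwL] at h0
        · intro hwL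
          exact hL.1 hlt.le hwL
      intro u w h L hL
      rcases h with h | h
      · exact key u w h L hL
      · exact (key w u h L hL).symm
    intro q hq
    rw [mem_classOf]
    have hchain := hπ.2.2.2.1 S hS p hp q hq
    clear hq
    intro L hL
    induction hchain with
    | refl => exact Iff.rfl
    | tail hmid hlaststep ih =>
      exact ih.trans (hstep _ _ hlaststep L hL)

lemma Fpi_injOn (K : Type) [Field K] :
    Set.InjOn (fun π : Finset (Finset P) => Fpi K P π) (CCpartitions P) := by
  intro π₁ h₁ π₂ h₂ heq
  have heq' : Fpi K P π₁ = Fpi K P π₂ := heq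
  ext S
  constructor
  · intro hS
    obtain ⟨p, hp⟩ := h₁.1 S hS
    obtain ⟨T, hT, hpT⟩ := h₂.2.2.1 p
    have e1 : classOf (Fpi K P π₁) p = S := block_eq_classOf K π₁ h₁ hS hp
    have e2 : classOf (Fpi K P π₂) p = T := block_eq_classOf K π₂ h₂ hT hpT
    rw [heq'] at e1
    rw [e1] at e2
    exact e2 ▸ hT
  · intro hS
    obtain ⟨p, hp⟩ := h₂.1 S hS
    obtain ⟨T, hT, hpT⟩ := h₁.2.2.1 p
    have e1 : classOf (Fpi K P π₂) p = S := block_eq_classOf K π₂ h₂ hS hp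
    have e2 : classOf (Fpi K P π₁) p = T := block_eq_classOf K π₁ h₁ hT hpT
    rw [← heq'] at e1
    rw [e1] at e2
    exact e2 ▸ hT

end InjCore
/-- For a finite connected poset `P`, the assignment `π ↦ F_π` is a
bijection from the set of connected compatible partitions of `P` onto the set of faces of
the cone `D(M_P)`. -/
theorem faces_of_stability_space_are_connected_compatible_partitions
    (K : Type) [Field K] (P : Type) [PartialOrder P] [Fintype P] [DecidableEq P]
    (hP : posetConnected P) :
    Set.BijOn (fun π : Finset (Finset P) => Fpi K P π) (CCpartitions P)
      {F : Set (P → ℝ) | IsFace (stabSpace (thinRep K (hasseQuiver P))) F} := by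
  refine ⟨?_, ?_, ?_⟩
  · intro π hπ
    exact Fpi_isFace K π hπ
  · exact Fpi_injOn K
  · intro Fc hFc
    obtain ⟨a, ha, hFeq⟩ := hFc
    obtain ⟨π, hπ, hFpi⟩ := surj_core (P := P) K a (fun v hv => ha v hv)
    refine ⟨π, hπ, ?_⟩
    show Fpi K P π = Fc
    have hFeq' : Fc = Dcone K P ∩ {v : P → ℝ | rInner a v = 0} := hFeq
    exact hFpi.trans hFeq'.symm
end

section
/- Let P be a finite poset. Then {v ∈ R^P : Σ_{p∈P} v_p = 0 and Σ_{p∈L} v_p ≤ 0 for every lower set L of P} = cone({e_y − e_x : x ⋖ y in P}); that is, the stability space D(M_P) of the thin representation M_P equals the non-negative span of the vectors e_y − e_x over the covering relations x ⋖ y of P. -/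
attribute [local instance] Classical.propDecidable

section AuxProof

variable {E : Type} [AddCommMonoid E] [Module ℝ E] {X : Set E}

theorem cone_zero : (0 : E) ∈ coneSpan X :=
  ⟨0, Fin.elim0, Fin.elim0, fun j => j.elim0, fun j => j.elim0, by simp⟩

theorem cone_mem {u : E} (hu : u ∈ X) : u ∈ coneSpan X :=
  ⟨1, fun _ => 1, fun _ => u, fun _ => zero_le_one, fun _ => hu, by simp⟩

theorem cone_add {u w : E} (hu : u ∈ coneSpan X) (hw : w ∈ coneSpan X) :
    u + w ∈ coneSpan X := by
  obtain ⟨n, c, f, hc, hf, rfl⟩ := hu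
  obtain ⟨m, d, g, hd, hg, rfl⟩ := hw
  refine ⟨n + m, Fin.append c d, Fin.append f g, ?_, ?_, ?_⟩
  · intro j
    refine Fin.addCases (fun i => ?_) (fun i => ?_) j <;> simp [hc, hd]
  · intro j
    refine Fin.addCases (fun i => ?_) (fun i => ?_) j <;> simp [hf, hg]
  · rw [Fin.sum_univ_add]
    simp

theorem cone_smul {u : E} {t : ℝ} (ht : 0 ≤ t) (hu : u ∈ coneSpan X) :
    t • u ∈ coneSpan X := by
  obtain ⟨n, c, f, hc, hf, rfl⟩ := hu
  exact ⟨n, fun j => t * c j, f, fun j => mul_nonneg ht (hc j), hf, by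
    rw [Finset.smul_sum]; simp [mul_smul]⟩

variable {P : Type} [PartialOrder P] [Fintype P] [DecidableEq P]

theorem single_sub_mem (x y : P) (h : x ≤ y) :
    (Pi.single y (1 : ℝ) - Pi.single x 1) ∈
      coneSpan {u : P → ℝ | ∃ x y : P, x ⋖ y ∧
        u = Pi.single y (1 : ℝ) - Pi.single x (1 : ℝ)} := by
  have : LocallyFiniteOrder P := Fintype.toLocallyFiniteOrder
  have h' := le_iff_reflTransGen_covBy.mp h
  induction h' with
  | refl => simpa using (cone_zero : (0 : P → ℝ) ∈ _)
  | @tail b c hab hbc ih =>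
      have : (Pi.single c (1 : ℝ) - Pi.single x 1 : P → ℝ) =
          ((Pi.single c (1 : ℝ) - Pi.single b 1 : P → ℝ) +
            (Pi.single b (1 : ℝ) - Pi.single x 1 : P → ℝ) : P → ℝ) := by
        abel
      rw [this]
      exact cone_add (cone_mem ⟨b, c, hbc, rfl⟩) (ih (le_iff_reflTransGen_covBy.mpr hab))

omit [PartialOrder P] [Fintype P] in
theorem sum_single_ite (T : Finset P) (y : P) :
    ∑ p ∈ T, Pi.single y (1 : ℝ) p = if y ∈ T then (1 : ℝ) else 0 := by
  simp [Pi.single_apply, Finset.sum_ite_eq']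

theorem split_step {n : ℕ}
    (ih : ∀ (S : Finset P) (v : P → ℝ),
      (Fintype.card P + 1) * S.card + (Finset.univ.filter (fun p => v p ≠ 0)).card ≤ n →
      (∀ p, v p ≠ 0 → p ∈ S) → (∑ p ∈ S, v p = 0) →
      (∀ T ⊆ S, (∀ a ∈ S, ∀ b ∈ T, a ≤ b → a ∈ T) → ∑ p ∈ T, v p ≤ 0) →
      v ∈ coneSpan {u : P → ℝ | ∃ x y : P, x ⋖ y ∧
        u = Pi.single y (1 : ℝ) - Pi.single x (1 : ℝ)})
    (S : Finset P) (v : P → ℝ)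
    (hn : (Fintype.card P + 1) * S.card ≤ n + 1)
    (hsupp : ∀ p, v p ≠ 0 → p ∈ S) (hsum : ∑ p ∈ S, v p = 0)
    (hlow : ∀ T ⊆ S, (∀ a ∈ S, ∀ b ∈ T, a ≤ b → a ∈ T) → ∑ p ∈ T, v p ≤ 0)
    (T : Finset P) (hTS : T ⊆ S) (hTne : T.Nonempty) (hTpr : T ≠ S)
    (hTlow : ∀ a ∈ S, ∀ b ∈ T, a ≤ b → a ∈ T) (hT0 : ∑ p ∈ T, v p = 0) :
    v ∈ coneSpan {u : P → ℝ | ∃ x y : P, x ⋖ y ∧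
        u = Pi.single y (1 : ℝ) - Pi.single x (1 : ℝ)} := by
  classical
  set N := Fintype.card P with hN
  set v1 : P → ℝ := fun p => if p ∈ T then v p else 0 with hv1
  set v2 : P → ℝ := fun p => if p ∈ T then 0 else v p with hv2
  have hv : v = v1 + v2 := by
    funext p; by_cases h : p ∈ T <;> simp [hv1, hv2, h]
  have hcardT : T.card < S.card := Finset.card_lt_card (hTS.ssubset_of_ne hTpr)
  have hcardTpos : 0 < T.card := Finset.card_pos.mpr hTne
  have hcardsd : (S \ T).card < S.card := by
    rw [Finset.card_sdiff_of_subset hTS]; omega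
  have hfilt1 : (Finset.univ.filter (fun p => v1 p ≠ 0)).card ≤ N := by
    simpa [hN] using Finset.card_filter_le Finset.univ (fun p => v1 p ≠ 0)
  have hfilt2 : (Finset.univ.filter (fun p => v2 p ≠ 0)).card ≤ N := by
    simpa [hN] using Finset.card_filter_le Finset.univ (fun p => v2 p ≠ 0)
  have hmul1 : (N + 1) * T.card + (N + 1) ≤ (N + 1) * S.card := by
    calc (N + 1) * T.card + (N + 1) = (N + 1) * (T.card + 1) := by ring
    _ ≤ (N + 1) * S.card := Nat.mul_le_mul_left _ (by omega)
  have hmul2 : (N + 1) * (S \ T).card + (N + 1) ≤ (N + 1) * S.card := by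
    calc (N + 1) * (S \ T).card + (N + 1) = (N + 1) * ((S \ T).card + 1) := by ring
    _ ≤ (N + 1) * S.card := Nat.mul_le_mul_left _ (by omega)
  have h1 : v1 ∈ coneSpan {u : P → ℝ | ∃ x y : P, x ⋖ y ∧
      u = Pi.single y (1 : ℝ) - Pi.single x (1 : ℝ)} := by
    apply ih T v1 (by omega)
    · intro p hp
      by_cases h : p ∈ T
      · exact h
      · simp [hv1, h] at hp
    · have : ∑ p ∈ T, v1 p = ∑ p ∈ T, v p :=
        Finset.sum_congr rfl (fun p hp => by simp [hv1, hp])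
      rw [this]; exact hT0
    · intro T' hT'T hT'cl
      have hsum' : ∑ p ∈ T', v1 p = ∑ p ∈ T', v p :=
        Finset.sum_congr rfl (fun p hp => by simp [hv1, hT'T hp])
      rw [hsum']
      exact hlow T' (hT'T.trans hTS)
        (fun a ha b hb hab => hT'cl a (hTlow a ha b (hT'T hb) hab) b hb hab)
  have h2 : v2 ∈ coneSpan {u : P → ℝ | ∃ x y : P, x ⋖ y ∧
      u = Pi.single y (1 : ℝ) - Pi.single x (1 : ℝ)} := by
    apply ih (S \ T) v2 (by omega)
    · intro p hp
      by_cases h : p ∈ T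
      · simp [hv2, h] at hp
      · have : v p ≠ 0 := by simpa [hv2, h] using hp
        exact Finset.mem_sdiff.mpr ⟨hsupp p this, h⟩
    · have : ∑ p ∈ S \ T, v2 p = ∑ p ∈ S \ T, v p :=
        Finset.sum_congr rfl (fun p hp => by simp [hv2, (Finset.mem_sdiff.mp hp).2])
      rw [this, Finset.sum_sdiff_eq_sub hTS, hsum, hT0]; ring
    · intro T' hT'sd hT'cl
      have hdisj : Disjoint T T' := by
        refine Finset.disjoint_left.mpr (fun a haT haT' => ?_)
        exact (Finset.mem_sdiff.mp (hT'sd haT')).2 haT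
      have hsum' : ∑ p ∈ T', v2 p = ∑ p ∈ T', v p :=
        Finset.sum_congr rfl
          (fun p hp => by simp [hv2, (Finset.mem_sdiff.mp (hT'sd hp)).2])
      have hUlow : ∀ a ∈ S, ∀ b ∈ T ∪ T', a ≤ b → a ∈ T ∪ T' := by
        intro a ha b hb hab
        rcases Finset.mem_union.mp hb with hb | hb
        · exact Finset.mem_union_left _ (hTlow a ha b hb hab)
        · by_cases haT : a ∈ T
          · exact Finset.mem_union_left _ haT
          · exact Finset.mem_union_right _
              (hT'cl a (Finset.mem_sdiff.mpr ⟨ha, haT⟩) b hb hab)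
      have hUsub : T ∪ T' ⊆ S :=
        Finset.union_subset hTS (hT'sd.trans (Finset.sdiff_subset))
      have := hlow (T ∪ T') hUsub hUlow
      rw [Finset.sum_union hdisj, hT0] at this
      rw [hsum']; linarith
  rw [hv]; exact cone_add h1 h2

theorem main_cone : ∀ (n : ℕ) (S : Finset P) (v : P → ℝ),
    (Fintype.card P + 1) * S.card + (Finset.univ.filter (fun p => v p ≠ 0)).card ≤ n →
    (∀ p, v p ≠ 0 → p ∈ S) → (∑ p ∈ S, v p = 0) →
    (∀ T ⊆ S, (∀ a ∈ S, ∀ b ∈ T, a ≤ b → a ∈ T) → ∑ p ∈ T, v p ≤ 0) →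
    v ∈ coneSpan {u : P → ℝ | ∃ x y : P, x ⋖ y ∧
        u = Pi.single y (1 : ℝ) - Pi.single x (1 : ℝ)} := by
  intro n
  induction n using Nat.strong_induction_on with
  | _ n ih =>
  intro S v hμ hsupp hsum hlow
  classical
  by_cases hv : v = 0
  · subst hv; exact cone_zero
  set N := Fintype.card P with hN
  -- v ≠ 0 : the support is nonempty, so n ≥ 1
  obtain ⟨p₀, hp₀⟩ : ∃ p, v p ≠ 0 := Function.ne_iff.mp hv
  have hfiltpos : 0 < (Finset.univ.filter (fun p => v p ≠ 0)).card :=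
    Finset.card_pos.mpr ⟨p₀, Finset.mem_filter.mpr ⟨Finset.mem_univ _, hp₀⟩⟩
  have hn1 : 1 ≤ n := by omega
  have ih' : ∀ (S' : Finset P) (v' : P → ℝ),
      (N + 1) * S'.card + (Finset.univ.filter (fun p => v' p ≠ 0)).card ≤ n - 1 →
      (∀ p, v' p ≠ 0 → p ∈ S') → (∑ p ∈ S', v' p = 0) →
      (∀ T ⊆ S', (∀ a ∈ S', ∀ b ∈ T, a ≤ b → a ∈ T) → ∑ p ∈ T, v' p ≤ 0) →
      v' ∈ coneSpan {u : P → ℝ | ∃ x y : P, x ⋖ y ∧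
        u = Pi.single y (1 : ℝ) - Pi.single x (1 : ℝ)} :=
    fun S' v' h1 h2 h3 h4 => ih (n - 1) (by omega) S' v' h1 h2 h3 h4
  have hnS : (N + 1) * S.card ≤ (n - 1) + 1 := by omega
  by_cases htight : ∃ T, T ⊆ S ∧ T.Nonempty ∧ T ≠ S ∧
      (∀ a ∈ S, ∀ b ∈ T, a ≤ b → a ∈ T) ∧ ∑ p ∈ T, v p = 0
  · obtain ⟨T, h1, h2, h3, h4, h5⟩ := htight
    exact split_step ih' S v hnS hsupp hsum hlow T h1 h2 h3 h4 h5
  · push_neg at htight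
    have hneg : ∀ T, T ⊆ S → T.Nonempty → T ≠ S →
        (∀ a ∈ S, ∀ b ∈ T, a ≤ b → a ∈ T) → ∑ p ∈ T, v p < 0 :=
      fun T hs hne hpr hcl => lt_of_le_of_ne (hlow T hs hcl) (htight T hs hne hpr hcl)
    -- find a positive coordinate
    obtain ⟨y₀, hy₀⟩ : ∃ y, 0 < v y := by
      by_contra h
      push_neg at h
      have hz : ∀ p ∈ S, v p = 0 :=
        (Finset.sum_eq_zero_iff_of_nonpos (fun p _ => h p)).mp hsum
      apply hv; funext p
      by_cases hp : p ∈ S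
      · exact hz p hp
      · by_contra hne; exact hp (hsupp p hne)
    -- the lower closure of the positive support
    set L : Finset P := S.filter (fun p => ∃ a ∈ S, 0 < v a ∧ p ≤ a) with hLdef
    have hLS : L ⊆ S := Finset.filter_subset _ _
    have hLclosed : ∀ a ∈ S, ∀ b ∈ L, a ≤ b → a ∈ L := by
      intro a ha b hb hab
      obtain ⟨hbS, c, hcS, hc, hbc⟩ := Finset.mem_filter.mp hb
      exact Finset.mem_filter.mpr ⟨ha, c, hcS, hc, hab.trans hbc⟩
    have hy₀S : y₀ ∈ S := hsupp y₀ (ne_of_gt hy₀)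
    have hy₀L : y₀ ∈ L := Finset.mem_filter.mpr ⟨hy₀S, y₀, hy₀S, hy₀, le_refl _⟩
    obtain ⟨x, hxL, hxneg⟩ : ∃ x ∈ L, v x < 0 := by
      by_contra h
      push_neg at h
      have h1 : v y₀ ≤ ∑ p ∈ L, v p := Finset.single_le_sum (fun p hp => h p hp) hy₀L
      have h2 : ∑ p ∈ L, v p ≤ 0 := hlow L hLS hLclosed
      linarith
    obtain ⟨hxS, y, hyS, hyv, hxy⟩ := Finset.mem_filter.mp hxL
    have hxlty : x < y := lt_of_le_of_ne hxy (fun h => by rw [h] at hxneg; linarith)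
    -- the finset of candidate step sizes
    set 𝒯 : Finset (Finset P) := S.powerset.filter
      (fun T => (∀ a ∈ S, ∀ b ∈ T, a ≤ b → a ∈ T) ∧ x ∈ T ∧ y ∉ T) with h𝒯def
    set A : Finset ℝ := insert (v y) (insert (-v x) (𝒯.image (fun T => -∑ p ∈ T, v p)))
      with hAdef
    have hAne : A.Nonempty := Finset.insert_nonempty _ _
    set t := A.min' hAne with htdef
    have h𝒯prop : ∀ T ∈ 𝒯, T ⊆ S ∧ T.Nonempty ∧ T ≠ S ∧
        (∀ a ∈ S, ∀ b ∈ T, a ≤ b → a ∈ T) ∧ x ∈ T ∧ y ∉ T := by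
      intro T hT
      obtain ⟨hTp, hcl, hxT, hyT⟩ := Finset.mem_filter.mp hT
      have hTS : T ⊆ S := Finset.mem_powerset.mp hTp
      exact ⟨hTS, ⟨x, hxT⟩, fun h => hyT (h ▸ hyS), hcl, hxT, hyT⟩
    have htpos : 0 < t := by
      rw [htdef, Finset.lt_min'_iff]
      intro a ha
      rcases Finset.mem_insert.mp ha with rfl | ha
      · exact hyv
      rcases Finset.mem_insert.mp ha with rfl | ha
      · linarith
      obtain ⟨T, hT, rfl⟩ := Finset.mem_image.mp ha
      obtain ⟨hTS, hTne, hTpr, hcl, _, _⟩ := h𝒯prop T hT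
      have := hneg T hTS hTne hTpr hcl
      linarith
    have hty : t ≤ v y := Finset.min'_le _ _ (Finset.mem_insert_self _ _)
    have htx : t ≤ -v x := Finset.min'_le _ _
      (Finset.mem_insert.mpr (Or.inr (Finset.mem_insert_self _ _)))
    have htT : ∀ T ∈ 𝒯, t ≤ -∑ p ∈ T, v p := fun T hT => Finset.min'_le _ _
      (Finset.mem_insert.mpr (Or.inr (Finset.mem_insert.mpr
        (Or.inr (Finset.mem_image.mpr ⟨T, hT, rfl⟩)))))
    set w : P → ℝ := Pi.single y 1 - Pi.single x 1 with hwdef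
    set v' : P → ℝ := v - t • w with hv'def
    have hvv' : v = v' + t • w := by rw [hv'def]; abel
    have hw_mem : t • w ∈ coneSpan {u : P → ℝ | ∃ x y : P, x ⋖ y ∧
        u = Pi.single y (1 : ℝ) - Pi.single x (1 : ℝ)} :=
      cone_smul htpos.le (single_sub_mem x y hxy)
    have hsumT : ∀ T : Finset P, ∑ p ∈ T, v' p =
        ∑ p ∈ T, v p - t * ((if y ∈ T then (1:ℝ) else 0) - (if x ∈ T then 1 else 0)) := by
      intro T
      have h0 : ∀ p, v' p = v p - t * w p := fun p => by
        rw [hv'def]; simp [smul_eq_mul]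
      have : ∑ p ∈ T, v' p = ∑ p ∈ T, v p - t * ∑ p ∈ T, w p := by
        rw [Finset.sum_congr rfl (fun p (_ : p ∈ T) => h0 p),
          Finset.sum_sub_distrib, Finset.mul_sum]
      rw [this, hwdef]
      have hw : ∑ p ∈ T, (Pi.single y (1:ℝ) - Pi.single x 1 : P → ℝ) p =
          (if y ∈ T then (1:ℝ) else 0) - (if x ∈ T then 1 else 0) := by
        simp only [Pi.sub_apply]
        rw [Finset.sum_sub_distrib, sum_single_ite T y, sum_single_ite T x]
      rw [hw]
    have hv'x : v' x = v x + t := by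
      rw [hv'def, hwdef]
      simp [Pi.single_apply, hxlty.ne, (hxlty.ne).symm]
    have hv'y : v' y = v y - t := by
      rw [hv'def, hwdef]
      simp [Pi.single_apply, hxlty.ne']
    have hv'other : ∀ p, p ≠ x → p ≠ y → v' p = v p := by
      intro p hpx hpy
      rw [hv'def, hwdef]
      simp [Pi.single_apply, hpx, hpy]
    have hsupp' : ∀ p, v' p ≠ 0 → p ∈ S := by
      intro p hp
      by_cases h1 : p = x
      · exact h1 ▸ hxS
      by_cases h2 : p = y
      · exact h2 ▸ hyS
      · exact hsupp p (fun h => hp (by rw [hv'other p h1 h2, h]))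
    have hsum' : ∑ p ∈ S, v' p = 0 := by
      rw [hsumT S, hsum, if_pos hyS, if_pos hxS]; ring
    have hlow' : ∀ T ⊆ S, (∀ a ∈ S, ∀ b ∈ T, a ≤ b → a ∈ T) → ∑ p ∈ T, v' p ≤ 0 := by
      intro T hTS hcl
      rw [hsumT T]
      by_cases hyT : y ∈ T
      · have hxT : x ∈ T := hcl x hxS y hyT hxy
        rw [if_pos hyT, if_pos hxT]
        have := hlow T hTS hcl
        linarith
      · by_cases hxT : x ∈ T
        · have hT𝒯 : T ∈ 𝒯 := Finset.mem_filter.mpr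
            ⟨Finset.mem_powerset.mpr hTS, hcl, hxT, hyT⟩
          have := htT T hT𝒯
          rw [if_neg hyT, if_pos hxT]
          linarith
        · rw [if_neg hyT, if_neg hxT]
          have := hlow T hTS hcl
          linarith
    by_cases htight' : ∃ T, T ⊆ S ∧ T.Nonempty ∧ T ≠ S ∧
        (∀ a ∈ S, ∀ b ∈ T, a ≤ b → a ∈ T) ∧ ∑ p ∈ T, v' p = 0
    · obtain ⟨T, h1, h2, h3, h4, h5⟩ := htight'
      rw [hvv']
      exact cone_add (split_step ih' S v' hnS hsupp' hsum' hlow' T h1 h2 h3 h4 h5) hw_mem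
    · -- the minimum is attained at v y or -v x, so the support shrinks
      have ht_mem : t ∈ A := Finset.min'_mem _ _
      have hzero : v' x = 0 ∨ v' y = 0 := by
        rcases Finset.mem_insert.mp ht_mem with h | h
        · right; rw [hv'y, h]; ring
        rcases Finset.mem_insert.mp h with h | h
        · left; rw [hv'x, h]; ring
        · exfalso
          obtain ⟨T, hT, hTt⟩ := Finset.mem_image.mp h
          obtain ⟨hTS, hTne, hTpr, hcl, hxT, hyT⟩ := h𝒯prop T hT
          apply htight'
          refine ⟨T, hTS, hTne, hTpr, hcl, ?_⟩
          rw [hsumT T, if_neg hyT, if_pos hxT]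
          have h' : -∑ p ∈ T, v p = t := hTt
          linarith
      have hsubset : Finset.univ.filter (fun p => v' p ≠ 0) ⊆
          Finset.univ.filter (fun p => v p ≠ 0) := by
        intro p hp
        have hp' : v' p ≠ 0 := (Finset.mem_filter.mp hp).2
        refine Finset.mem_filter.mpr ⟨Finset.mem_univ _, ?_⟩
        by_cases h1 : p = x
        · subst h1; exact ne_of_lt hxneg
        by_cases h2 : p = y
        · subst h2; exact ne_of_gt hyv
        · rw [← hv'other p h1 h2]; exact hp'
      have hssub : Finset.univ.filter (fun p => v' p ≠ 0) ⊂
          Finset.univ.filter (fun p => v p ≠ 0) := by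
        refine ⟨hsubset, fun hsup => ?_⟩
        rcases hzero with h | h
        · have hx1 : x ∈ Finset.univ.filter (fun p => v p ≠ 0) :=
            Finset.mem_filter.mpr ⟨Finset.mem_univ _, ne_of_lt hxneg⟩
          have := (Finset.mem_filter.mp (hsup hx1)).2
          exact this h
        · have hy1 : y ∈ Finset.univ.filter (fun p => v p ≠ 0) :=
            Finset.mem_filter.mpr ⟨Finset.mem_univ _, ne_of_gt hyv⟩
          have := (Finset.mem_filter.mp (hsup hy1)).2
          exact this h
      have hcard : (Finset.univ.filter (fun p => v' p ≠ 0)).card <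
          (Finset.univ.filter (fun p => v p ≠ 0)).card := Finset.card_lt_card hssub
      rw [hvv']
      refine cone_add (ih (n - 1) (by omega) S v' (by omega) hsupp' hsum' hlow') hw_mem


theorem cone_subset_D (v : P → ℝ)
    (hv : v ∈ coneSpan {u : P → ℝ | ∃ x y : P, x ⋖ y ∧
        u = Pi.single y (1 : ℝ) - Pi.single x (1 : ℝ)}) :
    (∑ p, v p = 0) ∧
      ∀ L : Finset P, (∀ x y : P, x ≤ y → y ∈ L → x ∈ L) → ∑ p ∈ L, v p ≤ 0 := by
  classical
  obtain ⟨m, c, f, hc, hf, rfl⟩ := hv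
  have key : ∀ L : Finset P, ∑ p ∈ L, (∑ j, c j • f j) p =
      ∑ j, c j * (∑ p ∈ L, f j p) := by
    intro L
    have h1 : ∀ p, (∑ j, c j • f j) p = ∑ j, c j * f j p := by
      intro p
      rw [Finset.sum_apply]
      exact Finset.sum_congr rfl (fun j _ => rfl)
    rw [Finset.sum_congr rfl (fun p (_ : p ∈ L) => h1 p), Finset.sum_comm]
    exact Finset.sum_congr rfl (fun j _ => (Finset.mul_sum _ _ _).symm)
  constructor
  · rw [key Finset.univ]
    apply Finset.sum_eq_zero
    intro j _
    obtain ⟨x, y, hcov, hfj⟩ := hf j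
    have : ∑ p ∈ Finset.univ, f j p = 0 := by
      rw [hfj]
      simp only [Pi.sub_apply]
      rw [Finset.sum_sub_distrib, sum_single_ite, sum_single_ite]
      simp
    rw [this]; ring
  · intro L hL
    rw [key L]
    apply Finset.sum_nonpos
    intro j _
    obtain ⟨x, y, hcov, hfj⟩ := hf j
    have : ∑ p ∈ L, f j p =
        (if y ∈ L then (1:ℝ) else 0) - (if x ∈ L then 1 else 0) := by
      rw [hfj]
      simp only [Pi.sub_apply]
      rw [Finset.sum_sub_distrib, sum_single_ite, sum_single_ite]
    rw [this]
    by_cases hyL : y ∈ L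
    · have hxL : x ∈ L := hL x y hcov.le hyL
      rw [if_pos hyL, if_pos hxL]
      simp
    · rw [if_neg hyL]
      have : (0:ℝ) ≤ if x ∈ L then (1:ℝ) else 0 := by positivity
      have h2 := hc j
      nlinarith

theorem submodule_field_cases (K : Type) [Field K] (L : Submodule K K) :
    L = ⊥ ∨ L = ⊤ := by
  by_cases h : L = ⊥
  · exact Or.inl h
  · right
    obtain ⟨c, hcL, hc⟩ := Submodule.exists_mem_ne_zero_of_ne_bot h
    rw [Submodule.eq_top_iff']
    intro z
    have : z = (z * c⁻¹) • c := by
      rw [smul_eq_mul]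
      field_simp
    rw [this]
    exact Submodule.smul_mem _ _ hcL

theorem stab_eq_D (K : Type) [Field K] :
    stabSpace (thinRep K (hasseQuiver P)) =
      {v : P → ℝ | (∑ p, v p = 0) ∧
        ∀ L : Finset P, (∀ x y : P, x ≤ y → y ∈ L → x ∈ L) → ∑ p ∈ L, v p ≤ 0} := by
  classical
  have hdim : ∀ v : P → ℝ, stabInner v (thinRep K (hasseQuiver P)).dimVec = ∑ p, v p := by
    intro v
    unfold stabInner QRep.dimVec thinRep
    simp [Module.finrank_self, hasseQuiver]
    rfl
  ext v
  constructor
  · rintro ⟨h0, hsub⟩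
    refine ⟨by rw [← hdim v]; exact h0, ?_⟩
    intro L hL
    -- build the subrepresentation attached to the lower set L
    set N : QSubRep (thinRep K (hasseQuiver P)) :=
      { L := fun i => if i ∈ L then (⊤ : Submodule K K) else ⊥
        compat := by
          intro a z hz
          show _ ∈ @ite _ ((a : (hasseQuiver P).A).1.1 ∈ L) (Classical.propDecidable _)
            (⊤ : Submodule K K) ⊥
          have ha : (a : (hasseQuiver P).A).1.1 ⋖ (a : (hasseQuiver P).A).1.2 := a.2
          by_cases h2 : (a : (hasseQuiver P).A).1.2 ∈ L
          · rw [if_pos (hL _ _ ha.le h2)]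
            trivial
          · have hz' : z ∈ (⊥ : Submodule K K) := by
              have : z ∈ @ite _ ((a : (hasseQuiver P).A).1.2 ∈ L) (Classical.propDecidable _)
                  (⊤ : Submodule K K) ⊥ := hz
              rwa [if_neg h2] at this
            replace hz' : z = 0 := (Submodule.mem_bot K).mp hz'
            subst hz'
            exact Submodule.zero_mem _ } with hNdef
    have := hsub N
    have hrank : ∀ i, Module.finrank K (N.L i) = if i ∈ L then 1 else 0 := by
      intro i
      show Module.finrank K ↥(if i ∈ L then (⊤ : Submodule K K) else ⊥) = _
      by_cases h : i ∈ L
      · rw [if_pos h, if_pos h, finrank_top, Module.finrank_self]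
      · rw [if_neg h, if_neg h, finrank_bot]
    have hcalc : stabInner v (fun i => Module.finrank K (N.L i)) = ∑ p ∈ L, v p := by
      unfold stabInner
      simp only [hrank]
      simp only [mul_ite, mul_one, mul_zero, Nat.cast_ite, Nat.cast_one, Nat.cast_zero,
        Finset.sum_ite_mem, Finset.univ_inter]
      refine (Finset.sum_subset (Finset.subset_univ _) ?_).symm.trans (Finset.sum_congr rfl ?_)
      · intro x _ hx; simp [hx]; exact fun h => absurd h hx
      · intro x hx; simp [hx]; exact fun h => absurd hx h
    rw [hcalc] at this
    exact this
  · rintro ⟨h0, hlow⟩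
    refine ⟨by rw [hdim v]; exact h0, ?_⟩
    intro N
    set Lset : Finset P := Finset.univ.filter
      (fun i => N.L i = ⊤) with hLdef
    have hmem : ∀ i, i ∈ Lset ↔ N.L i = ⊤ := fun i => by
      rw [hLdef, Finset.mem_filter]
      exact ⟨fun h => h.2, fun h => ⟨Finset.mem_univ i, h⟩⟩
    have hdich : ∀ i, N.L i = ⊥ ∨ N.L i = ⊤ := fun i => submodule_field_cases K (N.L i)
    have hrank : ∀ i, Module.finrank K (N.L i) = if i ∈ Lset then 1 else 0 := by
      intro i
      by_cases h : i ∈ Lset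
      · have ht : N.L i = ⊤ := (hmem i).mp h
        rw [if_pos h, ht]
        rw [finrank_top]
        exact Module.finrank_self K
      · have hb : N.L i = ⊥ := by
          rcases hdich i with hb | ht
          · exact hb
          · exact absurd ((hmem i).mpr ht) h
        rw [if_neg h, hb, finrank_bot]
    have hcov : ∀ x y : P, x ⋖ y → y ∈ Lset → x ∈ Lset := by
      intro x y hxy hyL
      have hyT : N.L y = ⊤ := (hmem y).mp hyL
      set a : (hasseQuiver P).A := ⟨(x, y), hxy⟩ with hadef
      have h1 : (1 : K) ∈ N.L y := by rw [hyT]; trivial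
      have h2 : (1 : K) ∈ N.L x := N.compat a (1 : K) h1
      refine (hmem x).mpr ?_
      rcases hdich x with hb | ht
      · rw [hb] at h2
        exact absurd ((Submodule.mem_bot K).mp h2 : (1 : K) = 0) one_ne_zero
      · exact ht
    have hLlow : ∀ x y : P, x ≤ y → y ∈ Lset → x ∈ Lset := by
      intro x y hxy hy
      have : LocallyFiniteOrder P := Fintype.toLocallyFiniteOrder
      have h' := le_iff_reflTransGen_covBy.mp hxy
      induction h' with
      | refl => exact hy
      | @tail b c hab hbc ih =>
          exact ih (le_iff_reflTransGen_covBy.mpr hab)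
            (hcov b c hbc hy)
    have hcalc : stabInner v (fun i => Module.finrank K (N.L i)) = ∑ p ∈ Lset, v p := by
      unfold stabInner
      simp only [hrank]
      simp only [mul_ite, mul_one, mul_zero, Nat.cast_ite, Nat.cast_one, Nat.cast_zero,
        Finset.sum_ite_mem, Finset.univ_inter]
      refine (Finset.sum_subset (Finset.subset_univ _) ?_).symm.trans (Finset.sum_congr rfl ?_)
      · intro x _ hx; simp [hx]; exact fun h => absurd h hx
      · intro x hx; simp [hx]; exact fun h => absurd hx h
    rw [hcalc]
    exact hlow Lset hLlow

end AuxProof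

/-- For a finite poset `P`, the set of `v ∈ ℝ^P` summing to zero and
non-positive on every lower set is exactly the non-negative span of the vectors
`e_y − e_x` over the covering relations `x ⋖ y`; that is, the stability space of the thin
representation `M_P` equals this non-negative span. -/
theorem stability_space_of_poset_is_spanned_by_covers
    (K : Type) [Field K] (P : Type) [PartialOrder P] [Fintype P] [DecidableEq P] :
    ({v : P → ℝ | (∑ p, v p = 0) ∧
        ∀ L : Finset P, (∀ x y : P, x ≤ y → y ∈ L → x ∈ L) → ∑ p ∈ L, v p ≤ 0} =
      coneSpan {u : P → ℝ | ∃ x y : P, x ⋖ y ∧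
        u = Pi.single y (1 : ℝ) - Pi.single x (1 : ℝ)}) ∧
    stabSpace (thinRep K (hasseQuiver P)) =
      coneSpan {u : P → ℝ | ∃ x y : P, x ⋖ y ∧
        u = Pi.single y (1 : ℝ) - Pi.single x (1 : ℝ)} := by
  classical
  have hD : ({v : P → ℝ | (∑ p, v p = 0) ∧
      ∀ L : Finset P, (∀ x y : P, x ≤ y → y ∈ L → x ∈ L) → ∑ p ∈ L, v p ≤ 0} =
      coneSpan {u : P → ℝ | ∃ x y : P, x ⋖ y ∧
        u = Pi.single y (1 : ℝ) - Pi.single x (1 : ℝ)}) := by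
    ext v
    constructor
    · rintro ⟨h0, hlow⟩
      apply main_cone
        ((Fintype.card P + 1) * (Finset.univ : Finset P).card +
          (Finset.univ.filter (fun p => v p ≠ 0)).card)
        Finset.univ v le_rfl
      · intro p _
        exact Finset.mem_univ p
      · exact h0
      · intro T _ hcl
        exact hlow T (fun x y hxy hy => hcl x (Finset.mem_univ x) y hy hxy)
    · intro hv
      exact cone_subset_D v hv
  exact ⟨hD, (stab_eq_D K).trans hD⟩
end

section
/- Let A = KQ/I be a special biserial algebra over an algebraically closed field K and let w be a string for A, with string module M(w), thin representation T(w), linear map ι : R^{Q0} → R^d and subspace R ⊆ R^d as defined. Then ι(D(M(w))) = D(T(w)) ∩ R. -/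
attribute [local instance] Classical.propDecidable

/-- Letters: direct arrows (`inl`) and formal inverses of arrows (`inr`). -/
abbrev Letter (Q : FinQuiver) := Q.A ⊕ Q.A

/-- Source of a letter. -/
def lsrc {Q : FinQuiver} : Letter Q → Q.V
  | Sum.inl a => Q.s a
  | Sum.inr a => Q.t a

/-- Target of a letter. -/
def ltgt {Q : FinQuiver} : Letter Q → Q.V
  | Sum.inl a => Q.t a
  | Sum.inr a => Q.s a

/-- The formal inverse of a letter. -/
def linv {Q : FinQuiver} : Letter Q → Letter Q
  | Sum.inl a => Sum.inr a
  | Sum.inr a => Sum.inl a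

/-- The underlying quiver arrow of a letter. -/
def und {Q : FinQuiver} : Letter Q → Q.A
  | Sum.inl a => a
  | Sum.inr a => a

/-- A letter is direct if it is an arrow (not a formal inverse). -/
def isDir {Q : FinQuiver} (c : Letter Q) : Prop := c.isLeft = true

/-- Composability of a word of letters. -/
def WordComposable {Q : FinQuiver} : List (Letter Q) → Prop
  | [] => True
  | [_] => True
  | c :: d :: l => ltgt c = lsrc d ∧ WordComposable (d :: l)

/-- Reducedness of a word: no letter is followed by its own inverse. -/
def WordReduced {Q : FinQuiver} : List (Letter Q) → Prop
  | [] => True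
  | [_] => True
  | c :: d :: l => d ≠ linv c ∧ WordReduced (d :: l)

/-- A bound quiver: a set of (monomial) relations generating an admissible ideal. -/
structure BoundQuiver (Q : FinQuiver) where
  rel : List Q.A → Prop
  adm_comp : ∀ u, rel u → PathComposable u ∧ 2 ≤ u.length
  adm_bound : ∃ N : ℕ, ∀ u : List Q.A, PathComposable u → N ≤ u.length →
    ∃ u', rel u' ∧ u' <:+: u

/-- The special biserial conditions on a bound quiver algebra. -/
def SpecialBiserial {Q : FinQuiver} (D : BoundQuiver Q) : Prop :=
  (∀ v : Q.V, Set.ncard {a : Q.A | Q.s a = v} ≤ 2) ∧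
  (∀ v : Q.V, Set.ncard {a : Q.A | Q.t a = v} ≤ 2) ∧
  (∀ a c d : Q.A, Q.t a = Q.s c → Q.t a = Q.s d → c ≠ d → D.rel [a, c] ∨ D.rel [a, d]) ∧
  (∀ a b c : Q.A, Q.t a = Q.s c → Q.t b = Q.s c → a ≠ b → D.rel [a, c] ∨ D.rel [b, c])

/-- A string: a nonempty composable reduced word such that no subword of it or of its
inverse lies in the ideal. -/
structure IsString {Q : FinQuiver} (D : BoundQuiver Q) (w : List (Letter Q)) : Prop where
  ne : w ≠ []
  comp : WordComposable w
  red : WordReduced w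
  avoid : ∀ u : List Q.A, u.map Sum.inl <:+: w → ¬D.rel u
  avoid_inv : ∀ u : List Q.A, (u.map Sum.inr).reverse <:+: w → ¬D.rel u

/-- The `k`-fold concatenation of a word with itself. -/
def listPow {α : Type} (u : List α) : ℕ → List α
  | 0 => []
  | n + 1 => u ++ listPow u n

/-- A band: a cyclic word all of whose powers are strings, which is not itself a proper
power of a shorter word. -/
def IsBand {Q : FinQuiver} (D : BoundQuiver Q) (b : List (Letter Q)) : Prop :=
  b ≠ [] ∧ (∀ m : ℕ, 1 ≤ m → IsString D (listPow b m)) ∧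
    ∀ (u : List (Letter Q)) (k : ℕ), 2 ≤ k → b ≠ listPow u k

/-- The `j`-th vertex visited by a (nonempty) walk `w`. -/
def wVtx {Q : FinQuiver} (w : List (Letter Q)) (hw : w ≠ []) (j : ℕ) : Q.V :=
  if j = 0 then lsrc (w.head hw) else ltgt (w.getD (j - 1) (w.head hw))

/-- The basis vector at position `j` is sent to the one at position `k` by the arrow `a`. -/
def stepsTo {Q : FinQuiver} (w : List (Letter Q)) (a : Q.A) (j k : ℕ) : Prop :=
  (k = j + 1 ∧ w[j]? = some (Sum.inl a)) ∨ (j = k + 1 ∧ w[k]? = some (Sum.inr a))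

/-- The string module `M(w)` of a nonempty walk `w`, with one standard basis vector for each
vertex visit, direct letters acting forwards and inverse letters acting backwards. -/
noncomputable def stringRep (K : Type) [Field K] (Q : FinQuiver) (w : List (Letter Q))
    (hw : w ≠ []) : QRep K Q where
  M i := ({j : Fin (w.length + 1) // wVtx w hw j = i} → K)
  φ a := Matrix.mulVecLin
    (fun (p : {j : Fin (w.length + 1) // wVtx w hw (j : ℕ) = Q.t a})
         (q : {j : Fin (w.length + 1) // wVtx w hw (j : ℕ) = Q.s a}) =>
      if stepsTo w a (q.1 : ℕ) (p.1 : ℕ) then (1 : K) else 0)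

/-- The vertex `v_j` traversed by a cyclic word (indices mod the length). -/
def bVtx {Q : FinQuiver} (b : List (Letter Q)) (hb : b ≠ []) (j : ℕ) : Q.V :=
  lsrc (b.getD (j % b.length) (b.head hb))

/-- The `j`-th letter of a cyclic word (indices mod the length). -/
def bLett {Q : FinQuiver} (b : List (Letter Q)) (hb : b ≠ []) (j : ℕ) : Letter Q :=
  b.getD (j % b.length) (b.head hb)

/-- Entry of the Jordan block of size `m` with eigenvalue `lam`. -/
noncomputable def jordEntry {K : Type} [Field K] (lam : K) {m : ℕ} (κ μ : Fin m) : K :=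
  if κ = μ then lam else if (μ : ℕ) + 1 = (κ : ℕ) then 1 else 0

/-- The matrix entry of the action of the arrow `a` on a band module, from the basis vector
`z_j^μ` to the basis vector `z_k^κ`: all letters act by identity matrices except the last
one, which acts by the Jordan block with eigenvalue `lam`. -/
noncomputable def bandEntry {Q : FinQuiver} (K : Type) [Field K] (b : List (Letter Q))
    (hb : b ≠ []) (lam : K) {m : ℕ} (a : Q.A) (k j : ℕ) (κ μ : Fin m) : K :=
  (if bLett b hb j = Sum.inl a ∧ (j + 1) % b.length = k % b.length then
    (if j % b.length + 1 = b.length then jordEntry lam κ μ else if κ = μ then 1 else 0)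
   else 0)
  + (if bLett b hb k = Sum.inr a ∧ (k + 1) % b.length = j % b.length then
    (if k % b.length + 1 = b.length then jordEntry lam κ μ else if κ = μ then 1 else 0)
   else 0)

/-- The band module `M(b, lam, m)`. -/
noncomputable def bandRep (K : Type) [Field K] (Q : FinQuiver) (b : List (Letter Q))
    (hb : b ≠ []) (lam : K) (m : ℕ) : QRep K Q where
  M i := (({j : Fin b.length // bVtx b hb j = i} × Fin m) → K)
  φ a := Matrix.mulVecLin
    (fun (p : {j : Fin b.length // bVtx b hb (j : ℕ) = Q.t a} × Fin m)
         (q : {j : Fin b.length // bVtx b hb (j : ℕ) = Q.s a} × Fin m) =>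
      bandEntry K b hb lam a (p.1.1 : ℕ) (q.1.1 : ℕ) p.2 q.2)

/-- The quiver `Q_w` having the same shape as the walk `w`. -/
@[reducible] def stringQuiver (Q : FinQuiver) (w : List (Letter Q)) : FinQuiver where
  V := Fin (w.length + 1)
  A := Fin w.length
  s j := match w.get j with
    | Sum.inl _ => j.castSucc
    | Sum.inr _ => j.succ
  t j := match w.get j with
    | Sum.inl _ => j.succ
    | Sum.inr _ => j.castSucc

/-- Cyclic successor in `Fin n`. -/
def cycSucc {n : ℕ} (j : Fin n) : Fin n := ⟨((j : ℕ) + 1) % n, Nat.mod_lt _ j.pos⟩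

/-- The cyclic quiver `Q_b` having the same shape as the cyclic word `b`. -/
@[reducible] def bandQuiver (Q : FinQuiver) (b : List (Letter Q)) : FinQuiver where
  V := Fin b.length
  A := Fin b.length
  s j := match b.get j with
    | Sum.inl _ => j
    | Sum.inr _ => cycSucc j
  t j := match b.get j with
    | Sum.inl _ => cycSucc j
    | Sum.inr _ => j

/-- A ray vector of a cone. -/
def IsRay {E : Type} [AddCommMonoid E] [Module ℝ E] (C : Set E) (u : E) : Prop :=
  u ∈ C ∧ u ≠ 0 ∧ ∀ x ∈ C, ∀ y ∈ C, u = x + y →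
    (∃ c : ℝ, 0 ≤ c ∧ x = c • u) ∧ ∃ c : ℝ, 0 ≤ c ∧ y = c • u

/-- A minimal admissible sum: a nonzero non-negative combination of elements of `S` lying in
the subspace `Rsub`, such that no nonzero non-negative combination supported on a proper
subset of its support lies in `Rsub`. -/
def IsMinAdmissibleSum {E : Type} [AddCommGroup E] [Module ℝ E] (Rsub : Set E)
    (S : Finset E) (x : E) : Prop :=
  ∃ lam : E → ℝ, (∀ s ∈ S, 0 ≤ lam s) ∧ x = ∑ s ∈ S, lam s • s ∧ x ∈ Rsub ∧ x ≠ 0 ∧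
    ¬∃ mu : E → ℝ, (∀ s ∈ S, 0 ≤ mu s) ∧
      {s ∈ S | mu s ≠ 0} ⊂ {s ∈ S | lam s ≠ 0} ∧
      (∑ s ∈ S, mu s • s) ∈ Rsub ∧ (∑ s ∈ S, mu s • s) ≠ 0

/-- The preorder induced by a walk `u` on the vertices: generated by `t(α) ≤ s(α)` over the
underlying arrows `α` of the letters of `u`. -/
def wordRel {Q : FinQuiver} (u : List (Letter Q)) : Q.V → Q.V → Prop :=
  Relation.ReflTransGen (fun x y => ∃ c ∈ u, Q.t (und c) = x ∧ Q.s (und c) = y)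

/-- `v` is obtained from the cyclic word `b` by deleting one letter. -/
def DeleteOne {Q : FinQuiver} (b v : List (Letter Q)) : Prop :=
  ∃ (l₁ l₂ : List (Letter Q)) (c : Letter Q), b = l₁ ++ c :: l₂ ∧ v = l₂ ++ l₁

/-- The generating vector of the stability space of a thin band module attached to the
`i`-th letter: `e_{v_i} - e_{v_{i+1}}` for a direct letter and its negative otherwise. -/
noncomputable def sVec {Q : FinQuiver} (b : List (Letter Q)) (hb : b ≠ []) (i : ℕ) :
    Q.V → ℝ :=
  if isDir (bLett b hb i) then
    Pi.single (bVtx b hb i) 1 - Pi.single (bVtx b hb (i + 1)) 1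
  else Pi.single (bVtx b hb (i + 1)) 1 - Pi.single (bVtx b hb i) 1

/-- The set `S = {s_1, …, s_n}` of generating vectors. -/
def Sset {Q : FinQuiver} (b : List (Letter Q)) (hb : b ≠ []) : Set (Q.V → ℝ) :=
  {u | ∃ i < b.length, u = sVec b hb i}

/-- The `g`-vector of the thin band module: the sum of the `s_i` over direct letters. -/
noncomputable def gVec {Q : FinQuiver} (b : List (Letter Q)) (hb : b ≠ []) : Q.V → ℝ :=
  ∑ i ∈ Finset.range b.length, if isDir (bLett b hb i) then sVec b hb i else 0

/-- The coefficient `ε_i` (for the mathematical index `i`, with letters `α_{i-1}`, `α_i`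
at 0-based positions `i-2`, `i-1`). -/
noncomputable def epsCoef {Q : FinQuiver} (b : List (Letter Q)) (hb : b ≠ []) (i : ℕ) : ℝ :=
  if ¬isDir (bLett b hb (i - 2)) ∧ isDir (bLett b hb (i - 1)) then 1
  else if isDir (bLett b hb (i - 2)) ∧ ¬isDir (bLett b hb (i - 1)) then -1
  else 0

/-- The vector `g_w` for `w = α_1 ⋯ α_m` (the `g`-vector of `M(w)`). -/
noncomputable def gwVec {Q : FinQuiver} (b : List (Letter Q)) (hb : b ≠ []) (m : ℕ) :
    Q.V → ℝ :=
  (if isDir (bLett b hb 0) then Pi.single (bVtx b hb 0) (1 : ℝ) else 0)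
  + (if 1 ≤ m ∧ ¬isDir (bLett b hb (m - 1)) then Pi.single (bVtx b hb m) (1 : ℝ) else 0)
  + (if 1 ≤ m ∧ isDir (bLett b hb m) then -Pi.single (bVtx b hb (m + 1)) (1 : ℝ) else 0)
  + (if isDir (bLett b hb (b.length - 1)) then -Pi.single (bVtx b hb (b.length - 1)) (1 : ℝ)
     else 0)
  + ∑ i ∈ Finset.Icc 2 m, epsCoef b hb i • (Pi.single (bVtx b hb (i - 1)) (1 : ℝ) : Q.V → ℝ)

/-- The vector `g_w'` for `w = α_1 ⋯ α_m` (equal to `-g^{M(w)ᵒᵖ}`). -/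
noncomputable def gwVec' {Q : FinQuiver} (b : List (Letter Q)) (hb : b ≠ []) (m : ℕ) :
    Q.V → ℝ :=
  (if ¬isDir (bLett b hb 0) then -Pi.single (bVtx b hb 0) (1 : ℝ) else 0)
  + (if 1 ≤ m ∧ isDir (bLett b hb (m - 1)) then -Pi.single (bVtx b hb m) (1 : ℝ) else 0)
  + (if 1 ≤ m ∧ ¬isDir (bLett b hb m) then Pi.single (bVtx b hb (m + 1)) (1 : ℝ) else 0)
  + (if ¬isDir (bLett b hb (b.length - 1)) then Pi.single (bVtx b hb (b.length - 1)) (1 : ℝ)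
     else 0)
  + ∑ i ∈ Finset.Icc 2 m, epsCoef b hb i • (Pi.single (bVtx b hb (i - 1)) (1 : ℝ) : Q.V → ℝ)

def leadP {K : Type} [Field K] {ι : Type} [Fintype ι] (val : ι → ℕ)
    (L : Submodule K (ι → K)) (j : ι) : Prop :=
  ∃ y ∈ L, y j ≠ 0 ∧ ∀ k, val j < val k → y k = 0

lemma finrank_eq_card_lead {K : Type} [Field K] {ι : Type} [Fintype ι]
    (val : ι → ℕ) (hval : Function.Injective val) (L : Submodule K (ι → K)) :
    Module.finrank K L =
      (Finset.univ.filter (leadP val L)).card := by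
  classical
  set T := Finset.univ.filter (leadP val L) with hT
  have hmem : ∀ j : ↥T, ∃ y, y ∈ L ∧ y j.1 ≠ 0 ∧ ∀ k, val j.1 < val k → y k = 0 := by
    intro j
    exact (Finset.mem_filter.1 j.2).2
  choose g hgL hg0 hgv using hmem
  -- linear independence
  have hli : LinearIndependent K g := by
    rw [linearIndependent_iff']
    intro s f hsum i hi
    by_contra hfi
    -- pick the maximal val among nonzero coefficients
    have hne : (s.filter (fun j => f j ≠ 0)).Nonempty := ⟨i, Finset.mem_filter.2 ⟨hi, hfi⟩⟩
    obtain ⟨j0, hj0mem, hj0⟩ := Finset.mem_image.1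
      (((s.filter (fun j => f j ≠ 0)).image (fun j => val j.1)).max'_mem (hne.image _))
    have hj0s : j0 ∈ s := (Finset.mem_filter.1 hj0mem).1
    have hj0f : f j0 ≠ 0 := (Finset.mem_filter.1 hj0mem).2
    have := congrFun hsum j0.1
    rw [Finset.sum_apply] at this
    have hterm : ∀ j ∈ s, (f j • g j) j0.1 = if j = j0 then f j0 * g j0 j0.1 else 0 := by
      intro j hj
      by_cases hjj : j = j0
      · subst hjj; simp
      · rw [if_neg hjj]
        have hne2 : val j.1 ≠ val j0.1 := by
          intro h; exact hjj (Subtype.ext (hval h))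
        by_cases hf : f j = 0
        · simp [hf]
        · have hjm : val j.1 ≤ ((s.filter (fun j => f j ≠ 0)).image
              (fun j => val j.1)).max' (hne.image _) :=
            Finset.le_max' ((s.filter (fun j => f j ≠ 0)).image (fun j => val j.1))
              (val j.1) (Finset.mem_image.2 ⟨j, Finset.mem_filter.2 ⟨hj, hf⟩, rfl⟩)
          rw [← hj0] at hjm
          have hlt : val j.1 < val j0.1 := lt_of_le_of_ne hjm hne2
          simp [hgv j j0.1 hlt]
    rw [Finset.sum_congr rfl hterm, Finset.sum_ite_eq' s j0
      (fun _ => f j0 * g j0 j0.1)] at this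
    rw [if_pos hj0s] at this
    have : f j0 = 0 := by
      rcases mul_eq_zero.1 this with h | h
      · exact h
      · exact absurd h (hg0 j0)
    exact hj0f this
  -- span
  have hspan : Submodule.span K (Set.range g) = L := by
    apply le_antisymm
    · rw [Submodule.span_le]
      rintro _ ⟨j, rfl⟩
      exact hgL j
    · intro y hy
      -- induction on bound N
      have main : ∀ N : ℕ, ∀ y, y ∈ L → (∀ k, N ≤ val k → y k = 0) →
          y ∈ Submodule.span K (Set.range g) := by
        intro N
        induction N with
        | zero =>
          intro y _ hv
          have : y = 0 := funext fun k => hv k (Nat.zero_le _)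
          simp [this]
        | succ N ih =>
          intro y hyL hv
          by_cases hex : ∃ k0, val k0 = N ∧ y k0 ≠ 0
          · obtain ⟨k0, hk0v, hk0⟩ := hex
            have hk0T : k0 ∈ T := by
              rw [hT, Finset.mem_filter]
              refine ⟨Finset.mem_univ _, y, hyL, hk0, ?_⟩
              intro k hk
              exact hv k (by omega)
            set z := g ⟨k0, hk0T⟩ with hz
            have hz0 : z k0 ≠ 0 := hg0 ⟨k0, hk0T⟩
            have hy' : y - (y k0 / z k0) • z ∈ L :=
              L.sub_mem hyL (L.smul_mem _ (hgL ⟨k0, hk0T⟩))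
            have hv' : ∀ k, N ≤ val k → (y - (y k0 / z k0) • z) k = 0 := by
              intro k hk
              rcases Nat.lt_or_ge (val k) (N+1) with h | h
              · have : val k = N := by omega
                have : k = k0 := hval (this.trans hk0v.symm)
                subst this
                simp only [Pi.sub_apply, Pi.smul_apply, smul_eq_mul]
                field_simp
                simp
              · have h1 : y k = 0 := hv k h
                have h2 : z k = 0 := hgv ⟨k0, hk0T⟩ k (by show val k0 < val k; omega)
                simp [h1, h2]
            have := ih _ hy' hv'
            have hzmem : z ∈ Submodule.span K (Set.range g) :=
              Submodule.subset_span ⟨⟨k0, hk0T⟩, rfl⟩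
            have : y - (y k0 / z k0) • z + (y k0 / z k0) • z ∈
                Submodule.span K (Set.range g) :=
              Submodule.add_mem _ this (Submodule.smul_mem _ _ hzmem)
            simpa using this
          · push_neg at hex
            refine ih y hyL ?_
            intro k hk
            rcases Nat.lt_or_ge (val k) (N+1) with h | h
            · exact hex k (by omega)
            · exact hv k (by omega)
      exact main (Finset.univ.sup val + 1) y hy
        (fun k hk => absurd hk (by
          have : val k ≤ Finset.univ.sup val := Finset.le_sup (Finset.mem_univ k)
          omega))
  have := finrank_span_eq_card (R := K) hli
  rw [hspan] at this
  rw [this, Fintype.card_coe]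

def coordSub (K : Type) [Field K] {ι : Type} (s : Set ι) : Submodule K (ι → K) where
  carrier := {y | ∀ j, j ∉ s → y j = 0}
  add_mem' := fun ha hb j hj => by simp only [Pi.add_apply, ha j hj, hb j hj, add_zero]
  zero_mem' := fun j _ => rfl
  smul_mem' := fun c y hy j hj => by simp only [Pi.smul_apply, hy j hj, smul_zero]

lemma mem_coordSub {K : Type} [Field K] {ι : Type} {s : Set ι} {y : ι → K} :
    y ∈ coordSub K s ↔ ∀ j, j ∉ s → y j = 0 := Iff.rfl

lemma leadP_coordSub {K : Type} [Field K] {ι : Type} [Fintype ι] (val : ι → ℕ)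
    (hval : Function.Injective val) (s : Set ι) (j : ι) :
    leadP val (coordSub K s) j ↔ j ∈ s := by
  constructor
  · rintro ⟨y, hy, hj0, -⟩
    by_contra hjs
    exact hj0 (hy j hjs)
  · intro hjs
    refine ⟨Pi.single j 1, ?_, by simp, ?_⟩
    · intro k hk
      have : k ≠ j := fun h => hk (h ▸ hjs)
      simp [Pi.single_eq_of_ne this]
    · intro k hk
      have : k ≠ j := fun h => by rw [h] at hk; omega
      simp [Pi.single_eq_of_ne this]

lemma Ksub_dichotomy {K : Type} [Field K] (S : Submodule K K) : S = ⊥ ∨ S = ⊤ := by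
  by_cases h : S = ⊥
  · exact Or.inl h
  · right
    obtain ⟨x, hxS, hx⟩ := Submodule.exists_mem_ne_zero_of_ne_bot h
    rw [Submodule.eq_top_iff']
    intro y
    have : y = (y * x⁻¹) • x := by rw [smul_eq_mul, mul_assoc, inv_mul_cancel₀ hx, mul_one]
    rw [this]
    exact S.smul_mem _ hxS

lemma finrank_Ksub {K : Type} [Field K] (S : Submodule K K) :
    Module.finrank K S = if S = ⊥ then 0 else 1 := by
  rcases Ksub_dichotomy S with h | h <;> subst h
  · rw [if_pos rfl]; exact finrank_bot K K
  · have : (⊤ : Submodule K K) ≠ ⊥ := by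
      intro h
      have : (1 : K) ∈ (⊥ : Submodule K K) := h ▸ Submodule.mem_top
      simp only [Submodule.mem_bot] at this
      exact one_ne_zero this
    rw [if_neg this, finrank_top, Module.finrank_self]


noncomputable def ind (P : Prop) : ℝ := if P then 1 else 0

lemma ind_pos {P : Prop} (h : P) : ind P = 1 := if_pos h

lemma ind_neg {P : Prop} (h : ¬P) : ind P = 0 := if_neg h

lemma ind_eq_ite (P : Prop) [Decidable P] : ind P = if P then 1 else 0 := by
  by_cases h : P
  · rw [ind_pos h, if_pos h]
  · rw [ind_neg h, if_neg h]

lemma ind_congr {P Q' : Prop} (h : P ↔ Q') : ind P = ind Q' := by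
  by_cases hp : P
  · rw [ind_pos hp, ind_pos (h.1 hp)]
  · rw [ind_neg hp, ind_neg (fun q => hp (h.2 q))]

lemma top_ne_bot_K {K : Type} [Field K] : (⊤ : Submodule K K) ≠ ⊥ := by
  intro h
  have : (1 : K) ∈ (⊥ : Submodule K K) := h ▸ Submodule.mem_top
  rw [Submodule.mem_bot] at this
  exact one_ne_zero this

lemma card_sub_bridge {V : Type} {n : ℕ} [Fintype V] [DecidableEq V] (u : Fin n → V) (i : V)
    (P : {j : Fin n // u j = i} → Prop) [DecidablePred P] (sel : Fin n → Prop)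
    [DecidablePred sel]
    (hPsel : ∀ (j : Fin n) (h : u j = i), P ⟨j, h⟩ ↔ sel j) :
    (Finset.univ.filter P).card
      = ((Finset.univ.filter (fun j => u j = i)).filter sel).card := by
  apply Finset.card_bij (fun p _ => p.1)
  · rintro ⟨j, hj⟩ hp
    rw [Finset.mem_filter] at hp ⊢
    exact ⟨Finset.mem_filter.2 ⟨Finset.mem_univ _, hj⟩, (hPsel j hj).1 hp.2⟩
  · rintro ⟨j, hj⟩ - ⟨k, hk⟩ - h
    exact Subtype.ext h
  · intro j hj
    rw [Finset.mem_filter, Finset.mem_filter] at hj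
    exact ⟨⟨j, hj.1.2⟩, Finset.mem_filter.2 ⟨Finset.mem_univ _, (hPsel j hj.1.2).2 hj.2⟩, rfl⟩

lemma sum_bridge {V : Type} [Fintype V] [DecidableEq V] {n : ℕ} (u : Fin n → V) (v : V → ℝ)
    (P : ∀ i : V, {j : Fin n // u j = i} → Prop) [∀ i, DecidablePred (P i)]
    (sel : Fin n → Prop) [DecidablePred sel]
    (hPsel : ∀ (j : Fin n) (i : V) (h : u j = i), P i ⟨j, h⟩ ↔ sel j) :
    ∑ i, v i * ((Finset.univ.filter (P i)).card : ℝ)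
      = ∑ j, v (u j) * ind (sel j) := by
  rw [← Finset.sum_fiberwise Finset.univ u (fun j => v (u j) * ind (sel j))]
  apply Finset.sum_congr rfl
  intro i _
  rw [card_sub_bridge u i (P i) sel (fun j h => hPsel j i h)]
  have : ∀ j ∈ Finset.univ.filter (fun j => u j = i),
      v (u j) * ind (sel j) = v i * ind (sel j) := by
    intro j hj
    rw [(Finset.mem_filter.1 hj).2]
  rw [Finset.sum_congr rfl this, ← Finset.mul_sum]
  congr 1
  rw [Finset.sum_congr rfl (fun j _ => ind_eq_ite (sel j))]
  rw [Finset.sum_boole]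

-- ===== auxiliary word lemmas =====

lemma wordComposable_get {Q : FinQuiver} :
    ∀ (w : List (Letter Q)), WordComposable w →
      ∀ q (h : q + 1 < w.length), ltgt (w[q]'(by omega)) = lsrc (w[q+1]'h)
  | [], _, q, h => by simp at h
  | [c], _, q, h => by simp at h
  | c :: d :: l, hc, 0, h => hc.1
  | c :: d :: l, hc, (q+1), h => by
      have := wordComposable_get (d :: l) hc.2 q (by simpa using h)
      simpa using this

lemma wordReduced_get {Q : FinQuiver} :
    ∀ (w : List (Letter Q)), WordReduced w →
      ∀ q (h : q + 1 < w.length), (w[q+1]'h) ≠ linv (w[q]'(by omega))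
  | [], _, q, h => by simp at h
  | [c], _, q, h => by simp at h
  | c :: d :: l, hc, 0, h => hc.1
  | c :: d :: l, hc, (q+1), h => by
      have := wordReduced_get (d :: l) hc.2 q (by simpa using h)
      simpa using this

lemma wVtx_succ {Q : FinQuiver} (w : List (Letter Q)) (hw : w ≠ []) (q : ℕ)
    (h : q < w.length) : wVtx w hw (q + 1) = ltgt (w[q]'h) := by
  unfold wVtx
  rw [if_neg (by omega)]
  congr 1
  simp only [Nat.add_sub_cancel]
  exact List.getD_eq_getElem w _ h

lemma wVtx_lsrc {Q : FinQuiver} (w : List (Letter Q)) (hw : w ≠ [])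
    (hc : WordComposable w) (q : ℕ) (h : q < w.length) :
    wVtx w hw q = lsrc (w[q]'h) := by
  cases q with
  | zero =>
    unfold wVtx
    rw [if_pos rfl]
    congr 1
    exact List.head_eq_getElem hw
  | succ q =>
    rw [wVtx_succ w hw q (by omega)]
    exact wordComposable_get w hc q h

section Core

variable {K : Type} [Field K] {Q : FinQuiver} (w : List (Letter Q)) (hne : w ≠ [])

lemma stringRep_apply (a : Q.A) (y : (stringRep K Q w hne).M (Q.s a))
    (p : {j : Fin (w.length + 1) // wVtx w hne j = Q.t a}) :
    ((stringRep K Q w hne).φ a y) p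
      = ∑ q : {j : Fin (w.length + 1) // wVtx w hne j = Q.s a},
          (if stepsTo w a (q.1 : ℕ) (p.1 : ℕ) then (1 : K) else 0) * y q := by
  show Matrix.mulVec (fun (p' : {j : Fin (w.length + 1) // wVtx w hne (j : ℕ) = Q.t a})
      (q : {j : Fin (w.length + 1) // wVtx w hne (j : ℕ) = Q.s a}) =>
      if stepsTo w a (q.1 : ℕ) (p'.1 : ℕ) then (1 : K) else 0) y p = _
  simp [stringRep, Matrix.mulVecLin_apply, Matrix.mulVec, dotProduct]

/-- Direction A step: thin subrepresentation membership propagates along `stepsTo`. -/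
lemma thin_step (N : QSubRep (thinRep K (stringQuiver Q w)))
    (a : Q.A) (jq jp : Fin (w.length + 1)) (hstep : stepsTo w a (jq : ℕ) (jp : ℕ)) :
    N.L jq ≤ N.L jp := by
  rcases hstep with ⟨hk, hsome⟩ | ⟨hk, hsome⟩
  · obtain ⟨hlt, hget⟩ := List.getElem?_eq_some_iff.1 hsome
    have hs : (stringQuiver Q w).s ⟨(jq : ℕ), hlt⟩ = jq := by
      show (match w.get ⟨(jq : ℕ), hlt⟩ with
        | Sum.inl _ => Fin.castSucc ⟨(jq : ℕ), hlt⟩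
        | Sum.inr _ => Fin.succ ⟨(jq : ℕ), hlt⟩) = jq
      rw [List.get_eq_getElem, hget]
      exact Fin.ext rfl
    have ht : (stringQuiver Q w).t ⟨(jq : ℕ), hlt⟩ = jp := by
      show (match w.get ⟨(jq : ℕ), hlt⟩ with
        | Sum.inl _ => Fin.succ ⟨(jq : ℕ), hlt⟩
        | Sum.inr _ => Fin.castSucc ⟨(jq : ℕ), hlt⟩) = jp
      rw [List.get_eq_getElem, hget]
      exact Fin.ext (by simp [hk])
    intro x hx
    have := N.compat ⟨(jq : ℕ), hlt⟩ x (by rw [hs]; exact hx)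
    rw [ht] at this
    exact this
  · obtain ⟨hlt, hget⟩ := List.getElem?_eq_some_iff.1 hsome
    have hs : (stringQuiver Q w).s ⟨(jp : ℕ), hlt⟩ = jq := by
      show (match w.get ⟨(jp : ℕ), hlt⟩ with
        | Sum.inl _ => Fin.castSucc ⟨(jp : ℕ), hlt⟩
        | Sum.inr _ => Fin.succ ⟨(jp : ℕ), hlt⟩) = jq
      rw [List.get_eq_getElem, hget]
      exact Fin.ext (by simp [hk])
    have ht : (stringQuiver Q w).t ⟨(jp : ℕ), hlt⟩ = jp := by
      show (match w.get ⟨(jp : ℕ), hlt⟩ with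
        | Sum.inl _ => Fin.succ ⟨(jp : ℕ), hlt⟩
        | Sum.inr _ => Fin.castSucc ⟨(jp : ℕ), hlt⟩) = jp
      rw [List.get_eq_getElem, hget]
      exact Fin.ext rfl
    intro x hx
    have := N.compat ⟨(jp : ℕ), hlt⟩ x (by rw [hs]; exact hx)
    rw [ht] at this
    exact this

/-- Direction A construction: a thin subrepresentation of `T(w)` gives a coordinate
subrepresentation of `M(w)`. -/
noncomputable def coordOfThin (N : QSubRep (thinRep K (stringQuiver Q w))) :
    QSubRep (stringRep K Q w hne) where
  L i := coordSub K {p : {j : Fin (w.length + 1) // wVtx w hne j = i} | N.L p.1 ≠ ⊥}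
  compat a y hy := by
    intro p hp
    rw [Set.mem_setOf_eq, not_not] at hp
    rw [stringRep_apply]
    apply Finset.sum_eq_zero
    intro q _
    by_cases hst : stepsTo w a (q.1 : ℕ) (p.1 : ℕ)
    · have hq : N.L q.1 = ⊥ := le_bot_iff.1 (hp ▸ thin_step w N a q.1 p.1 hst)
      rw [hy q (by rw [Set.mem_setOf_eq, not_not]; exact hq), mul_zero]
    · rw [if_neg hst, zero_mul]

/-- Direction B core: the leading position moves along the action of an arrow. -/
lemma lead_step (hred : WordReduced w) (Lsub : QSubRep (stringRep K Q w hne)) (a : Q.A)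
    (jq jp : Fin (w.length + 1)) (hq : wVtx w hne (jq : ℕ) = Q.s a)
    (hp : wVtx w hne (jp : ℕ) = Q.t a) (hstep : stepsTo w a (jq : ℕ) (jp : ℕ)) :
    leadP (fun p => ((p.1 : Fin (w.length + 1)) : ℕ)) (Lsub.L (Q.s a)) ⟨jq, hq⟩ →
      leadP (fun p => ((p.1 : Fin (w.length + 1)) : ℕ)) (Lsub.L (Q.t a)) ⟨jp, hp⟩ := by
  rintro ⟨y, hyL, hy0, hyv⟩
  refine ⟨(stringRep K Q w hne).φ a y, Lsub.compat a y hyL, ?_, ?_⟩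
  · -- the value at jp is y at jq, nonzero
    erw [stringRep_apply]
    have hterm : ∀ q : {j : Fin (w.length + 1) // wVtx w hne j = Q.s a},
        (if stepsTo w a (q.1 : ℕ) ((jp : Fin (w.length+1)) : ℕ) then (1:K) else 0) * y q
          = if q = ⟨jq, hq⟩ then y q else 0 := by
      intro q
      by_cases hqq : q = (⟨jq, hq⟩ : {j : Fin (w.length + 1) // wVtx w hne j = Q.s a})
      · subst hqq
        rw [if_pos hstep, one_mul, if_pos rfl]
      · rw [if_neg hqq]
        have hqn : (q.1 : ℕ) ≠ (jq : ℕ) := by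
          intro h; exact hqq (Subtype.ext (Fin.ext h))
        by_cases hst : stepsTo w a (q.1 : ℕ) ((jp : Fin (w.length+1)) : ℕ)
        · exfalso
          rcases hst with ⟨h1, h2⟩ | ⟨h1, h2⟩
          · rcases hstep with ⟨h3, h4⟩ | ⟨h3, h4⟩
            · exact hqn (by omega)
            · -- w[q] = inl a, w[jp] = inr a, jq = jp + 1, jp = q + 1
              obtain ⟨hlt2, hget2⟩ := List.getElem?_eq_some_iff.1 h2
              obtain ⟨hlt4, hget4⟩ := List.getElem?_eq_some_iff.1 h4
              have hred' := wordReduced_get w hred (q.1 : ℕ)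
                (by omega : (q.1:ℕ) + 1 < w.length)
              apply hred'
              have e1 : (w[(q.1:ℕ)+1]'(by omega)) = Sum.inr a := by
                have : ((jp : Fin (w.length+1)) : ℕ) = (q.1:ℕ)+1 := h1
                rw [← hget4]; congr 1; omega
              rw [e1, hget2]
              rfl
          · rcases hstep with ⟨h3, h4⟩ | ⟨h3, h4⟩
            · -- q = jp + 1, w[jp] = inr a, jp = jq + 1, w[jq] = inl a
              obtain ⟨hlt2, hget2⟩ := List.getElem?_eq_some_iff.1 h2
              obtain ⟨hlt4, hget4⟩ := List.getElem?_eq_some_iff.1 h4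
              have hred' := wordReduced_get w hred ((jq : Fin (w.length+1)) : ℕ)
                (by omega : ((jq : Fin (w.length+1)):ℕ) + 1 < w.length)
              apply hred'
              have e1 : (w[((jq : Fin (w.length+1)):ℕ)+1]'(by omega)) = Sum.inr a := by
                rw [← hget2]; congr 1; omega
              rw [e1, hget4]
              rfl
            · exact hqn (by omega)
        · rw [if_neg hst, zero_mul]
    rw [Finset.sum_congr rfl (fun q _ => hterm q), Finset.sum_ite_eq' Finset.univ
      (⟨jq, hq⟩ : {j : Fin (w.length + 1) // wVtx w hne j = Q.s a}) y,
      if_pos (Finset.mem_univ _)]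
    exact hy0
  · -- vanishing above jp
    intro k hk0
    have hk : ((jp : Fin (w.length+1)) : ℕ) < ((k.1 : Fin (w.length+1)) : ℕ) := hk0
    erw [stringRep_apply]
    apply Finset.sum_eq_zero
    intro q _
    by_cases hst : stepsTo w a (q.1 : ℕ) ((k.1 : Fin (w.length+1)) : ℕ)
    · rw [if_pos hst, one_mul]
      apply hyv q
      show ((jq : Fin (w.length+1)) : ℕ) < (q.1 : ℕ)
      rcases hst with ⟨h1, h2⟩ | ⟨h1, h2⟩
      · rcases hstep with ⟨h3, h4⟩ | ⟨h3, h4⟩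
        · omega
        · -- jq = jp + 1, w[jp] = inr a; k = q+1 > jp, w[q] = inl a
          obtain ⟨hlt2, hget2⟩ := List.getElem?_eq_some_iff.1 h2
          obtain ⟨hlt4, hget4⟩ := List.getElem?_eq_some_iff.1 h4
          rcases Nat.lt_or_ge ((jq : Fin (w.length+1)) : ℕ) (q.1 : ℕ) with h | h
          · exact h
          · exfalso
            rcases Nat.eq_or_lt_of_le h with h' | h'
            · -- q = jq = jp + 1 : w[jp+1] = inl a contradicts reducedness
              have hred' := wordReduced_get w hred ((jp : Fin (w.length+1)) : ℕ)
                (by omega : ((jp : Fin (w.length+1)):ℕ) + 1 < w.length)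
              apply hred'
              have e1 : (w[((jp : Fin (w.length+1)):ℕ)+1]'(by omega)) = Sum.inl a := by
                rw [← hget2]; congr 1; omega
              rw [e1, hget4]
              rfl
            · -- q < jq, but k > jp forces q ≥ jp; so q = jp, w[jp] = inl and inr
              have hq' : (q.1 : ℕ) = ((jp : Fin (w.length+1)) : ℕ) := by omega
              have : (Sum.inl a : Letter Q) = Sum.inr a := by
                rw [← hget2, ← hget4]; congr 1
              exact Sum.inl_ne_inr this
      · rcases hstep with ⟨h3, h4⟩ | ⟨h3, h4⟩ <;> omega
    · rw [if_neg hst, zero_mul]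

end Core

section Main

variable {K : Type} [Field K] {Q : FinQuiver} (w : List (Letter Q)) (hne : w ≠ [])

/-- The global leading-position predicate of a subrepresentation of the string module. -/
def nsel (Lsub : QSubRep (stringRep K Q w hne)) (j : Fin (w.length + 1)) : Prop :=
  leadP (fun p => ((p.1 : Fin (w.length + 1)) : ℕ)) (Lsub.L (wVtx w hne (j : ℕ))) ⟨j, rfl⟩

lemma nsel_iff (Lsub : QSubRep (stringRep K Q w hne)) (j : Fin (w.length + 1))
    (i : Q.V) (h : wVtx w hne (j : ℕ) = i) :
    leadP (fun p => ((p.1 : Fin (w.length + 1)) : ℕ)) (Lsub.L i) ⟨j, h⟩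
      ↔ nsel w hne Lsub j := by
  subst h
  exact Iff.rfl

lemma val_inj (i : Q.V) :
    Function.Injective
      (fun p : {j : Fin (w.length + 1) // wVtx w hne (j : ℕ) = i} =>
        ((p.1 : Fin (w.length + 1)) : ℕ)) :=
  fun p q h => Subtype.ext (Fin.ext h)

/-- Direction B construction: the thin subrepresentation from leading positions. -/
noncomputable def thinOfString (hcomp : WordComposable w) (hred : WordReduced w)
    (Lsub : QSubRep (stringRep K Q w hne)) :
    QSubRep (thinRep K (stringQuiver Q w)) where
  L j := if nsel w hne Lsub j then ⊤ else ⊥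
  compat a' x hx := by
    have hlt : (a' : ℕ) < w.length := a'.2
    show x ∈ _
    rcases hget : w.get a' with a | a
    · -- direct letter
      have hs : (stringQuiver Q w).s a' = a'.castSucc := by
        show (match w.get a' with
          | Sum.inl _ => a'.castSucc
          | Sum.inr _ => a'.succ) = _
        rw [hget]
      have ht : (stringQuiver Q w).t a' = a'.succ := by
        show (match w.get a' with
          | Sum.inl _ => a'.succ
          | Sum.inr _ => a'.castSucc) = _
        rw [hget]
      rw [hs] at hx
      rw [ht]
      beta_reduce at hx ⊢
      by_cases hsel : nsel w hne Lsub a'.castSucc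
      · have hgete : w[(a' : ℕ)]'hlt = Sum.inl a := by
          rw [← List.get_eq_getElem]; exact hget
        have hq : wVtx w hne ((a'.castSucc : Fin (w.length + 1)) : ℕ) = Q.s a := by
          show wVtx w hne (a' : ℕ) = Q.s a
          rw [wVtx_lsrc w hne hcomp _ hlt, hgete]
          rfl
        have hp : wVtx w hne ((a'.succ : Fin (w.length + 1)) : ℕ) = Q.t a := by
          show wVtx w hne ((a' : ℕ) + 1) = Q.t a
          rw [wVtx_succ w hne _ hlt, hgete]
          rfl
        have hstep : stepsTo w a ((a'.castSucc : Fin (w.length + 1)) : ℕ)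
            ((a'.succ : Fin (w.length + 1)) : ℕ) :=
          Or.inl ⟨rfl, List.getElem?_eq_some_iff.2 ⟨hlt, hgete⟩⟩
        have := lead_step w hne hred Lsub a a'.castSucc a'.succ hq hp hstep
          ((nsel_iff w hne Lsub a'.castSucc _ hq).2 hsel)
        rw [if_pos ((nsel_iff w hne Lsub a'.succ _ hp).1 this)]
        exact trivial
      · rw [if_neg hsel] at hx
        erw [Submodule.mem_bot] at hx
        subst hx
        exact Submodule.zero_mem _
    · -- inverse letter
      have hs : (stringQuiver Q w).s a' = a'.succ := by
        show (match w.get a' with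
          | Sum.inl _ => a'.castSucc
          | Sum.inr _ => a'.succ) = _
        rw [hget]
      have ht : (stringQuiver Q w).t a' = a'.castSucc := by
        show (match w.get a' with
          | Sum.inl _ => a'.succ
          | Sum.inr _ => a'.castSucc) = _
        rw [hget]
      rw [hs] at hx
      rw [ht]
      beta_reduce at hx ⊢
      by_cases hsel : nsel w hne Lsub a'.succ
      · have hgete : w[(a' : ℕ)]'hlt = Sum.inr a := by
          rw [← List.get_eq_getElem]; exact hget
        have hq : wVtx w hne ((a'.succ : Fin (w.length + 1)) : ℕ) = Q.s a := by
          show wVtx w hne ((a' : ℕ) + 1) = Q.s a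
          rw [wVtx_succ w hne _ hlt, hgete]
          rfl
        have hp : wVtx w hne ((a'.castSucc : Fin (w.length + 1)) : ℕ) = Q.t a := by
          show wVtx w hne (a' : ℕ) = Q.t a
          rw [wVtx_lsrc w hne hcomp _ hlt, hgete]
          rfl
        have hstep : stepsTo w a ((a'.succ : Fin (w.length + 1)) : ℕ)
            ((a'.castSucc : Fin (w.length + 1)) : ℕ) :=
          Or.inr ⟨rfl, List.getElem?_eq_some_iff.2 ⟨hlt, hgete⟩⟩
        have := lead_step w hne hred Lsub a a'.succ a'.castSucc hq hp hstep
          ((nsel_iff w hne Lsub a'.succ _ hq).2 hsel)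
        rw [if_pos ((nsel_iff w hne Lsub a'.castSucc _ hp).1 this)]
        exact trivial
      · rw [if_neg hsel] at hx
        erw [Submodule.mem_bot] at hx
        subst hx
        exact Submodule.zero_mem _

lemma E1 (v : Q.V → ℝ) :
    stabInner v (stringRep K Q w hne).dimVec
      = ∑ j : Fin (w.length + 1), v (wVtx w hne (j : ℕ)) := by
  unfold stabInner
  have h1 : ∀ i, ((stringRep K Q w hne).dimVec i : ℝ)
      = ((Finset.univ.filter
          (fun _ : {j : Fin (w.length + 1) // wVtx w hne (j : ℕ) = i} => True)).card : ℝ) := by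
    intro i
    congr 1
    rw [Finset.filter_true_of_mem (fun _ _ => trivial)]
    show Module.finrank K ({j : Fin (w.length + 1) // wVtx w hne (j : ℕ) = i} → K) = _
    rw [Module.finrank_fintype_fun_eq_card, Finset.card_univ]
  have hb := sum_bridge (fun j : Fin (w.length + 1) => wVtx w hne (j : ℕ)) v
    (fun i => fun _ : {j : Fin (w.length + 1) // wVtx w hne (j : ℕ) = i} => True)
    (fun _ => True) (fun j i h => Iff.rfl)
  simp only [ind_pos trivial, mul_one] at hb
  rw [Finset.sum_congr rfl (fun i _ => by rw [h1 i])]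
  exact hb

lemma E2 (x : Fin (w.length + 1) → ℝ) :
    stabInner x (thinRep K (stringQuiver Q w)).dimVec = ∑ j, x j := by
  unfold stabInner
  apply Finset.sum_congr rfl
  intro j _
  have h1 : (thinRep K (stringQuiver Q w)).dimVec j = 1 := Module.finrank_self K
  simp only [QRep.dimVec] at h1 ⊢
  rw [h1]
  simp

lemma E3 (x : Fin (w.length + 1) → ℝ) (N : QSubRep (thinRep K (stringQuiver Q w))) :
    stabInner x (fun j => Module.finrank K (N.L j))
      = ∑ j, x j * ind (N.L j ≠ ⊥) := by
  unfold stabInner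
  apply Finset.sum_congr rfl
  intro j _
  have hfr : Module.finrank K (N.L j) = if N.L j = ⊥ then 0 else 1 := finrank_Ksub (N.L j)
  simp only [hfr]
  by_cases h : N.L j = ⊥
  · rw [if_pos h, ind_neg (by simpa using h)]
    simp
  · rw [if_neg h, ind_pos h]
    simp

lemma E4 (v : Q.V → ℝ) (Lsub : QSubRep (stringRep K Q w hne)) :
    stabInner v (fun i => Module.finrank K (Lsub.L i))
      = ∑ j : Fin (w.length + 1),
          v (wVtx w hne (j : ℕ)) * ind (nsel w hne Lsub j) := by
  unfold stabInner
  refine Eq.trans (Finset.sum_congr rfl (fun i _ => ?_))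
    (sum_bridge (fun j : Fin (w.length + 1) => wVtx w hne (j : ℕ)) v
      (fun i => leadP (fun p : {j : Fin (w.length + 1) // wVtx w hne (j : ℕ) = i} =>
        ((p.1 : Fin (w.length + 1)) : ℕ)) (Lsub.L i))
      (nsel w hne Lsub) (fun j i h => nsel_iff w hne Lsub j i h))
  exact congrArg (fun t : ℕ => v i * (t : ℝ))
    (finrank_eq_card_lead _ (val_inj w hne i) (Lsub.L i))

lemma E5 (v : Q.V → ℝ) (N : QSubRep (thinRep K (stringQuiver Q w))) :
    stabInner v (fun i => Module.finrank K ((coordOfThin w hne N).L i))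
      = ∑ j : Fin (w.length + 1),
          v (wVtx w hne (j : ℕ)) * ind (N.L j ≠ ⊥) := by
  unfold stabInner
  refine Eq.trans (Finset.sum_congr rfl (fun i _ => ?_))
    (sum_bridge (fun j : Fin (w.length + 1) => wVtx w hne (j : ℕ)) v
      (fun i => fun p : {j : Fin (w.length + 1) // wVtx w hne (j : ℕ) = i} =>
        N.L p.1 ≠ ⊥)
      (fun j => N.L j ≠ ⊥) (fun j i h => Iff.rfl))
  have hfr : Module.finrank K ((coordOfThin w hne N).L i)
      = (Finset.univ.filter
          (fun p : {j : Fin (w.length + 1) // wVtx w hne (j : ℕ) = i} =>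
            N.L p.1 ≠ ⊥)).card :=
    (finrank_eq_card_lead
      (fun p : {j : Fin (w.length + 1) // wVtx w hne (j : ℕ) = i} =>
        ((p.1 : Fin (w.length + 1)) : ℕ)) (val_inj w hne i)
      ((coordOfThin w hne N).L i)).trans (by
        congr 1
        apply Finset.filter_congr
        intro p _
        exact leadP_coordSub
          (fun p : {j : Fin (w.length + 1) // wVtx w hne (j : ℕ) = i} =>
            ((p.1 : Fin (w.length + 1)) : ℕ)) (val_inj w hne i) _ p)
  exact congrArg (fun t : ℕ => v i * (t : ℝ)) hfr

end Main

/-- For a string `w` over a special biserial algebra, the image under `ι`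
of the stability space of the string module `M(w)` is the intersection of the stability
space of the thin representation `T(w)` with the subspace `R` identifying the coordinates
of repeated vertices. -/
theorem stability_space_of_string_module_from_thin
    (K : Type) [Field K] [IsAlgClosed K] (Q : FinQuiver) (D : BoundQuiver Q)
    (hsb : SpecialBiserial D) (w : List (Letter Q)) (hw : IsString D w) :
    (fun (v : Q.V → ℝ) (j : Fin (w.length + 1)) => v (wVtx w hw.ne j)) ''
        stabSpace (stringRep K Q w hw.ne) =
      stabSpace (thinRep K (stringQuiver Q w)) ∩
        {x : Fin (w.length + 1) → ℝ |
          ∀ j k : Fin (w.length + 1), wVtx w hw.ne j = wVtx w hw.ne k → x j = x k} := by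
  ext x
  simp only [Set.mem_image, Set.mem_inter_iff, Set.mem_setOf_eq]
  constructor
  · rintro ⟨v, hv, rfl⟩
    have hv' : IsSemistable (stringRep K Q w hw.ne) v := hv
    obtain ⟨hv1, hv2⟩ := hv'
    refine ⟨?_, ?_⟩
    · show IsSemistable (thinRep K (stringQuiver Q w)) _
      constructor
      · exact (E2 w _).trans ((E1 w hw.ne v).symm.trans hv1)
      · intro N
        exact ((E3 w _ N).trans (E5 w hw.ne v N).symm).trans_le (hv2 _)
    · intro j k h
      exact congrArg v h
  · rintro ⟨hx, hR⟩
    have hx' : IsSemistable (thinRep K (stringQuiver Q w)) x := hx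
    obtain ⟨hx1, hx2⟩ := hx'
    refine ⟨fun i => if h : ∃ j : Fin (w.length + 1), wVtx w hw.ne (j : ℕ) = i
      then x h.choose else 0, ?_, ?_⟩
    swap
    · -- the image condition
      funext j
      show (if h : ∃ j' : Fin (w.length + 1), wVtx w hw.ne (j' : ℕ) = wVtx w hw.ne (j : ℕ)
        then x h.choose else 0) = x j
      rw [dif_pos ⟨j, rfl⟩]
      exact hR _ j (Exists.choose_spec
        (⟨j, rfl⟩ : ∃ j' : Fin (w.length + 1),
          wVtx w hw.ne (j' : ℕ) = wVtx w hw.ne (j : ℕ)))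
    · set v : Q.V → ℝ := fun i => if h : ∃ j : Fin (w.length + 1), wVtx w hw.ne (j : ℕ) = i
        then x h.choose else 0 with hvdef
      have hvu : ∀ j : Fin (w.length + 1), v (wVtx w hw.ne (j : ℕ)) = x j := by
        intro j
        show (if h : ∃ j' : Fin (w.length + 1), wVtx w hw.ne (j' : ℕ) = wVtx w hw.ne (j : ℕ)
          then x h.choose else 0) = x j
        rw [dif_pos ⟨j, rfl⟩]
        exact hR _ j (Exists.choose_spec
          (⟨j, rfl⟩ : ∃ j' : Fin (w.length + 1),
            wVtx w hw.ne (j' : ℕ) = wVtx w hw.ne (j : ℕ)))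
      show IsSemistable (stringRep K Q w hw.ne) v
      constructor
      · have c2 : (∑ j : Fin (w.length + 1), v (wVtx w hw.ne (j : ℕ)))
            = ∑ j : Fin (w.length + 1), x j := Finset.sum_congr rfl (fun j _ => hvu j)
        exact (E1 w hw.ne v).trans (c2.trans ((E2 w x).symm.trans hx1))
      · intro Lsub
        have hNle := hx2 (thinOfString w hw.ne hw.comp hw.red Lsub)
        have hiff : ∀ j : Fin (w.length + 1),
            nsel w hw.ne Lsub j ↔ (thinOfString w hw.ne hw.comp hw.red Lsub).L j ≠ ⊥ := by
          intro j
          constructor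
          · intro hsel
            show (if nsel w hw.ne Lsub j then (⊤ : Submodule K K) else ⊥) ≠ ⊥
            rw [if_pos hsel]
            exact top_ne_bot_K
          · intro hnb
            by_contra hsel
            apply hnb
            show (if nsel w hw.ne Lsub j then (⊤ : Submodule K K) else ⊥) = ⊥
            rw [if_neg hsel]
        have b2 : (∑ j : Fin (w.length + 1),
              v (wVtx w hw.ne (j : ℕ)) * ind (nsel w hw.ne Lsub j))
            = ∑ j : Fin (w.length + 1),
              x j * ind ((thinOfString w hw.ne hw.comp hw.red Lsub).L j ≠ ⊥) := by
          apply Finset.sum_congr rfl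
          intro j _
          rw [hvu j, ind_congr (hiff j)]
        exact ((E4 w hw.ne v Lsub).trans (b2.trans (E3 w x _).symm)).trans_le hNle
end
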